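/- For every player p, every history h, every randomised move α of player p at last(h), and every semantics ⋆ ∈ {S, A}: α is ⋆-admissible at h (⋆-LA at h) if and only if for every a ∈ Supp(α): (1) the Dirac move a is ⋆-admissible at h, and (2) a ≈^⋆_h b for every b ∈ Supp(α). -/

import Mathlib

open scoped Classical

noncomputable section

/-- Run of a deterministic automaton along an infinite word. -/
def autRun {α Q : Type} (q0 : Q) (d : Q → α → Q) (ρ : ℕ → α) : ℕ → Q
  | 0 => q0
  | k + 1 => d (autRun q0 d ρ k) (ρ k)

/-- A concurrent game played on a finite graph. -/
structure ConcGame where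
  S : Type
  A : Type
  P : Type
  [fS : Fintype S]
  [fA : Fintype A]
  [fP : Fintype P]
  [dS : DecidableEq S]
  [dA : DecidableEq A]
  [dP : DecidableEq P]
  init : S
  act : P → S → Set A
  act_nonempty : ∀ p s, (act p s).Nonempty
  tr : S → (P → A) → S

open MeasureTheory

namespace ConcGame

attribute [instance] ConcGame.fS ConcGame.fA ConcGame.fP ConcGame.dS ConcGame.dA ConcGame.dP

inductive Sem where
  | Sure : Sem
  | Almost : Sem

variable (G : ConcGame)

instance : MeasurableSpace G.S := ⊤

/-- Randomised move of player `p` at state `s`: a probability distribution on `act p s`. -/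
def Mixed (p : G.P) (s : G.S) : Type :=
  { f : G.A → ℝ // (∀ a, 0 ≤ f a) ∧ (∑ a, f a) = 1 ∧ ∀ a, f a ≠ 0 → a ∈ G.act p s }

/-- Support of a randomised move. -/
def Supp {p : G.P} {s : G.S} (α : G.Mixed p s) : Set G.A := { a | α.1 a ≠ 0 }

/-- A randomised move is Dirac if it puts all mass on one action. -/
def IsDirac {p : G.P} {s : G.S} (α : G.Mixed p s) : Prop := ∃ a, α.1 a = 1

/-- The Dirac move on action `a`. -/
def dirac (p : G.P) (s : G.S) (a : G.A) (ha : a ∈ G.act p s) : G.Mixed p s :=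
  ⟨fun b => if b = a then 1 else 0, by
    refine ⟨fun b => ?_, ?_, fun b hb => ?_⟩
    · by_cases h : b = a <;> simp [h]
    · simp
    · by_cases h : b = a
      · subst h; exact ha
      · simp [h] at hb⟩

/-- The last state of a history (the initial state for the empty list). -/
def lastS (l : List G.S) : G.S := l.getLast?.getD G.init

/-- One step of the game graph. -/
def Step (s s' : G.S) : Prop :=
  ∃ m : G.P → G.A, (∀ p, m p ∈ G.act p s) ∧ G.tr s m = s'

/-- Histories: finite paths starting at the initial state. -/
def IsHistory (l : List G.S) : Prop := l.head? = some G.init ∧ l.Chain' G.Step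

/-- Runs: infinite sequences of states. -/
abbrev Run : Type := ℕ → G.S

/-- A strategy of player `p`: maps each history to a randomised move at its last state. -/
def Strategy (p : G.P) : Type := (l : List G.S) → G.Mixed p (G.lastS l)

/-- A profile of strategies, one per player. -/
def Profile : Type := ∀ p : G.P, G.Strategy p

/-- A strategy for the coalition `-p` of all players other than `p`. -/
def CoStrategy (p : G.P) : Type := ∀ q : G.P, q ≠ p → G.Strategy q

/-- Combining a strategy of `p` with a coalition strategy of `-p` into a profile. -/
def combine {p : G.P} (σ : G.Strategy p) (τ : G.CoStrategy p) : G.Profile :=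
  fun q => if h : q = p then (by subst h; exact σ) else τ q h

/-- One-step transition probability when each player independently samples its move. -/
def stepProb (s : G.S) (β : G.P → G.A → ℝ) (s' : G.S) : ℝ :=
  ∑ m ∈ Finset.univ.filter (fun m : G.P → G.A => G.tr s m = s'), ∏ p, β p (m p)

/-- Probability of the cylinder of a history under a profile. -/
def cylProb (σv : G.Profile) (l : List G.S) : ℝ :=
  ∏ i ∈ Finset.range (l.length - 1),
    G.stepProb (G.lastS (l.take (i + 1))) (fun p => (σv p (l.take (i + 1))).1)
      (G.lastS (l.take (i + 2)))

/-- The cylinder of a finite word: runs having it as a prefix. -/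
def Cyl (l : List G.S) : Set G.Run := { ρ | ∀ i, i < l.length → ρ i = l.getD i G.init }

/-- Histories with positive probability under a profile. -/
def HistOf (σv : G.Profile) : Set (List G.S) :=
  { l | G.IsHistory l ∧ 0 < G.cylProb σv l }

/-- The prefix of length `k+1` of a run. -/
def prefixList (ρ : G.Run) (k : ℕ) : List G.S := (List.range (k + 1)).map ρ

/-- Outcome of a profile: runs all of whose prefixes have positive probability. -/
def Outcome (σv : G.Profile) : Set G.Run := { ρ | ∀ k, G.prefixList ρ k ∈ G.HistOf σv }

/-- Histories compatible with a single strategy of player `p`. -/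
def HistOfS {p : G.P} (σ : G.Strategy p) : Set (List G.S) :=
  ⋃ τ : G.CoStrategy p, G.HistOf (G.combine σ τ)

/-- `Pr` assigns to every profile a probability measure on runs which agrees with the
    inductively defined cylinder probabilities. -/
def ValidPr (Pr : G.Profile → Measure G.Run) : Prop :=
  (∀ σv, IsProbabilityMeasure (Pr σv)) ∧
    ∀ σv l, G.IsHistory l → Pr σv (G.Cyl l) = ENNReal.ofReal (G.cylProb σv l)

/-- A profile wins a condition under the sure / almost-sure semantics. -/
def Wins (Pr : G.Profile → Measure G.Run) : Sem → G.Profile → Set G.Run → Prop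
  | Sem.Sure, σv, Φ => G.Outcome σv ⊆ Φ
  | Sem.Almost, σv, Φ => Pr σv Φ = 1

/-- A profile wins a condition from a given history, under each semantics. -/
def WinsFrom (Pr : G.Profile → Measure G.Run) : Sem → G.Profile → Set G.Run → List G.S → Prop
  | Sem.Sure, σv, Φ, l => G.Outcome σv ∩ G.Cyl l ⊆ Φ
  | Sem.Almost, σv, Φ, l => l ∈ G.HistOf σv ∧ Pr σv (Φ ∩ G.Cyl l) / Pr σv (G.Cyl l) = 1

/-- A strategy of `p` is winning if it wins against every coalition strategy. -/
def StratWins (Pr : G.Profile → Measure G.Run) (st : Sem) {p : G.P} (σ : G.Strategy p)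
    (Φ : Set G.Run) : Prop :=
  ∀ τ : G.CoStrategy p, G.Wins Pr st (G.combine σ τ) Φ

/-- A strategy of `p` is winning from a history `l`. -/
def StratWinsFrom (Pr : G.Profile → Measure G.Run) (st : Sem) {p : G.P} (σ : G.Strategy p)
    (Φ : Set G.Run) (l : List G.S) : Prop :=
  ∀ τ : G.CoStrategy p, G.WinsFrom Pr st (G.combine σ τ) Φ l

/-- Weak dominance between strategies of player `p`. -/
def WDom (Pr : G.Profile → Measure G.Run) (win : G.P → Set G.Run) (st : Sem) {p : G.P}
    (σ σ' : G.Strategy p) : Prop :=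
  ∀ τ : G.CoStrategy p,
    G.Wins Pr st (G.combine σ τ) (win p) → G.Wins Pr st (G.combine σ' τ) (win p)

/-- Strict dominance between strategies. -/
def SDom (Pr : G.Profile → Measure G.Run) (win : G.P → Set G.Run) (st : Sem) {p : G.P}
    (σ σ' : G.Strategy p) : Prop :=
  G.WDom Pr win st σ σ' ∧ ¬ G.WDom Pr win st σ' σ

/-- Equivalence of strategies. -/
def EquivS (Pr : G.Profile → Measure G.Run) (win : G.P → Set G.Run) (st : Sem) {p : G.P}
    (σ σ' : G.Strategy p) : Prop :=
  G.WDom Pr win st σ σ' ∧ G.WDom Pr win st σ' σ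

/-- A strategy is admissible iff it is not dominated. -/
def Admissible (Pr : G.Profile → Measure G.Run) (win : G.P → Set G.Run) (st : Sem) {p : G.P}
    (σ : G.Strategy p) : Prop :=
  ∀ σ' : G.Strategy p, ¬ G.SDom Pr win st σ σ'

/-- Weak dominance between randomised moves at a history. -/
def MWDom (Pr : G.Profile → Measure G.Run) (win : G.P → Set G.Run) (st : Sem) {p : G.P}
    (l : List G.S) (α α' : G.Mixed p (G.lastS l)) : Prop :=
  ∀ σ : G.Strategy p, l ∈ G.HistOfS σ → σ l = α →
    ∃ σ' : G.Strategy p, σ' l = α' ∧ G.WDom Pr win st σ σ'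

/-- Equivalence of moves at a history. -/
def MEquiv (Pr : G.Profile → Measure G.Run) (win : G.P → Set G.Run) (st : Sem) {p : G.P}
    (l : List G.S) (α α' : G.Mixed p (G.lastS l)) : Prop :=
  G.MWDom Pr win st l α α' ∧ G.MWDom Pr win st l α' α

/-- Strict dominance between moves at a history. -/
def MSDom (Pr : G.Profile → Measure G.Run) (win : G.P → Set G.Run) (st : Sem) {p : G.P}
    (l : List G.S) (α α' : G.Mixed p (G.lastS l)) : Prop :=
  G.MWDom Pr win st l α α' ∧ ¬ G.MWDom Pr win st l α' α

/-- A move is admissible at a history iff no move dominates it there. -/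
def MAdmissible (Pr : G.Profile → Measure G.Run) (win : G.P → Set G.Run) (st : Sem) {p : G.P}
    (l : List G.S) (α : G.Mixed p (G.lastS l)) : Prop :=
  ∀ α' : G.Mixed p (G.lastS l), ¬ G.MSDom Pr win st l α α'

/-- A strategy is locally admissible (LA) iff it plays admissible moves at every history. -/
def LA (Pr : G.Profile → Measure G.Run) (win : G.P → Set G.Run) (st : Sem) {p : G.P}
    (σ : G.Strategy p) : Prop :=
  ∀ l, G.IsHistory l → G.MAdmissible Pr win st l (σ l)

/-- The value of a history w.r.t. a strategy: 1 if winning from it, 0 if the coalition can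
    both let the strategy win and make it lose, -1 otherwise. -/
def ValStrat (Pr : G.Profile → Measure G.Run) (win : G.P → Set G.Run) (st : Sem) {p : G.P}
    (l : List G.S) (σ : G.Strategy p) : ℤ :=
  if G.StratWinsFrom Pr st σ (win p) l then 1
  else if (∃ τ : G.CoStrategy p, G.WinsFrom Pr st (G.combine σ τ) (win p) l) then 0
  else -1

/-- The value of a history for player `p`: the best value over the player's strategies. -/
def ValH (Pr : G.Profile → Measure G.Run) (win : G.P → Set G.Run) (st : Sem) (p : G.P)
    (l : List G.S) : ℤ :=
  if (∃ σ : G.Strategy p, G.ValStrat Pr win st l σ = 1) then 1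
  else if (∃ σ : G.Strategy p, G.ValStrat Pr win st l σ = 0) then 0
  else -1

/-- Strongly cooperative optimal strategies. -/
def SCO (Pr : G.Profile → Measure G.Run) (win : G.P → Set G.Run) (st : Sem) {p : G.P}
    (σ : G.Strategy p) : Prop :=
  ∀ l ∈ G.HistOfS σ, G.ValStrat Pr win st l σ = G.ValH Pr win st p l

/-- The full action tuple obtained from `a` for `p` and `c` for the coalition. -/
def combAct {p : G.P} (a : G.A) (c : ∀ q : G.P, q ≠ p → G.A) : G.P → G.A :=
  fun q => if h : q = p then (by subst h; exact a) else c q h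

/-- The tuple of one-step distributions obtained from a move of `p` and coalition moves. -/
def combMix {p : G.P} {s : G.S} (α : G.Mixed p s) (γ : ∀ q : G.P, q ≠ p → G.Mixed q s) :
    G.P → G.A → ℝ :=
  fun q => if h : q = p then (by subst h; exact α.1) else (γ q h).1

/-- Simple safety games: each player loses exactly the runs visiting its bad states, and
    bad states are closed under steps. -/
def SimpleSafety (win : G.P → Set G.Run) : Prop :=
  ∃ Bad : G.P → Set G.S,
    (∀ p, win p = { ρ : G.Run | ∀ i, ρ i ∉ Bad p }) ∧
    ∀ p s, s ∈ Bad p → ∀ s', G.Step s s' → s' ∈ Bad p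

/-- Prefix-independent winning conditions. -/
def PrefIndep (Φ : Set G.Run) : Prop :=
  ∀ (ρ : G.Run) (k : ℕ), ρ ∈ Φ ↔ (fun i => ρ (i + k)) ∈ Φ

/-- `stf` and `plf` give the unique state and player where each action is available. -/
def UniqueAvail (stf : G.A → G.S) (plf : G.A → G.P) : Prop :=
  ∀ (q : G.P) (s : G.S) (a : G.A), a ∈ G.act q s → plf a = q ∧ stf a = s

/-- An action of player `q` is ⋆-LA if its Dirac move is admissible at every history where
    it is available. -/
def LAAct (Pr : G.Profile → Measure G.Run) (win : G.P → Set G.Run) (st : Sem)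
    (q : G.P) (a : G.A) : Prop :=
  ∀ (l : List G.S) (_ : G.IsHistory l) (ha : a ∈ G.act q (G.lastS l)),
    G.MAdmissible Pr win st l (G.dirac q (G.lastS l) a ha)

/-- Current `S`-component of a history of the derived game. -/
def dCur (l : List (G.S × (G.P → G.A))) : G.S := (l.getLast?.map Prod.fst).getD G.init

/-- Legal joint action in the derived game: available and ⋆-LA for every player. -/
def DLegal (Pr : G.Profile → Measure G.Run) (win : G.P → Set G.Run) (st : Sem)
    (s : G.S) (m : G.P → G.A) : Prop :=
  ∀ q, m q ∈ G.act q s ∧ G.LAAct Pr win st q (m q)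

/-- Histories of the derived game `G⋆_p` (the part after the initial state). -/
def IsDHistory (Pr : G.Profile → Measure G.Run) (win : G.P → Set G.Run) (st : Sem)
    (l : List (G.S × (G.P → G.A))) : Prop :=
  ∀ i (hi : i < l.length),
    G.DLegal Pr win st (G.dCur (l.take i)) (l.get ⟨i, hi⟩).2 ∧
    (l.get ⟨i, hi⟩).1 = G.tr (G.dCur (l.take i)) (l.get ⟨i, hi⟩).2

/-- Observation of a derived history: the projection to states. -/
def oHist (l : List (G.S × (G.P → G.A))) : List G.S := G.init :: l.map Prod.fst

/-- Observation-based Dirac strategies of player `p` in the derived game. -/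
def IsDStrategy (Pr : G.Profile → Measure G.Run) (win : G.P → Set G.Run) (st : Sem)
    (p : G.P) (σb : List (G.S × (G.P → G.A)) → G.A) : Prop :=
  (∀ l, G.IsDHistory Pr win st l → σb l ∈ G.act p (G.dCur l) ∧ G.LAAct Pr win st p (σb l)) ∧
  (∀ l l', G.oHist l = G.oHist l' → σb l = σb l')

/-- `σb` is a realisation of the strategy `σ` in the derived game. -/
def IsRealisation (Pr : G.Profile → Measure G.Run) (win : G.P → Set G.Run) (st : Sem)
    (p : G.P) (σ : G.Strategy p) (σb : List (G.S × (G.P → G.A)) → G.A) : Prop :=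
  G.IsDStrategy Pr win st p σb ∧
  ∀ l, G.IsDHistory Pr win st l → σb l ∈ G.Supp (σ (G.oHist l))

/-- The prefix of length `k` of a derived run. -/
def dPrefix (ρb : ℕ → G.S × (G.P → G.A)) (k : ℕ) : List (G.S × (G.P → G.A)) :=
  (List.range k).map ρb

/-- Outcome of a player-`p` strategy in the derived game: all derived runs consistent with
    it in which all players play legal ⋆-LA Dirac actions. -/
def DOutcome (Pr : G.Profile → Measure G.Run) (win : G.P → Set G.Run) (st : Sem)
    (p : G.P) (σb : List (G.S × (G.P → G.A)) → G.A) : Set (ℕ → G.S × (G.P → G.A)) :=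
  { ρb | ∀ k,
      G.DLegal Pr win st (G.dCur (G.dPrefix ρb k)) (ρb k).2 ∧
      (ρb k).2 p = σb (G.dPrefix ρb k) ∧
      (ρb k).1 = G.tr (G.dCur (G.dPrefix ρb k)) (ρb k).2 }

/-- Observation of a derived run: the induced run of `G`. -/
def oRun (ρb : ℕ → G.S × (G.P → G.A)) : G.Run :=
  fun k => match k with
  | 0 => G.init
  | Nat.succ n => (ρb n).1

/-- Value of a state for player `q` (well defined for prefix-independent conditions). -/
def ValSt (Pr : G.Profile → Measure G.Run) (win : G.P → Set G.Run) (st : Sem)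
    (q : G.P) (s : G.S) : ℤ :=
  if (∃ l, G.IsHistory l ∧ G.lastS l = s ∧ G.ValH Pr win st q l = 1) then 1
  else if (∃ l, G.IsHistory l ∧ G.lastS l = s ∧ G.ValH Pr win st q l = 0) then 0
  else -1

/-- States of the derived game where player `q` has value 0 but another choice of the
    coalition could have helped `q`. -/
def Help (Pr : G.Profile → Measure G.Run) (win : G.P → Set G.Run) (st : Sem)
    (stf : G.A → G.S) (q : G.P) : Set (G.S × (G.P → G.A)) :=
  { x | G.ValSt Pr win st q x.1 = 0 ∧
      ∃ c : ∀ r : G.P, r ≠ q → G.A, (∀ r hr, c r hr ∈ G.act r (stf (x.2 q))) ∧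
        0 ≤ G.ValSt Pr win st q (G.tr (stf (x.2 q)) (G.combAct (x.2 q) c)) ∧
        G.tr (stf (x.2 q)) (G.combAct (x.2 q) c) ≠ x.1 }

/-- The formula φ⁰_q evaluated on a derived run. -/
def phi0 (Pr : G.Profile → Measure G.Run) (win : G.P → Set G.Run) (st : Sem)
    (stf : G.A → G.S) (q : G.P) (ρb : ℕ → G.S × (G.P → G.A)) : Prop :=
  (∃ k, G.ValSt Pr win st q (G.oRun ρb k) ≠ 0) ∨
  (G.oRun ρb ∈ win q) ∨
  (∀ k, ∃ j, k ≤ j ∧ ρb j ∈ G.Help Pr win st stf q)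

/-- The formula φ¹_q evaluated on a derived run. -/
def phi1 (Pr : G.Profile → Measure G.Run) (win : G.P → Set G.Run) (st : Sem)
    (q : G.P) (ρb : ℕ → G.S × (G.P → G.A)) : Prop :=
  (∃ k, G.ValSt Pr win st q (G.oRun ρb k) = 1) → G.oRun ρb ∈ win q

/-- ω-regular sets of runs: recognised by a deterministic finite parity automaton. -/
def IsOmegaRegular (Φ : Set G.Run) : Prop :=
  ∃ (Q : Type) (_ : Fintype Q) (q0 : Q) (d : Q → G.S → Q) (c : Q → ℕ),
    Φ = { ρ : G.Run | ∃ n, Even n ∧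
      Set.Infinite { k | c (autRun q0 d ρ k) = n } ∧
      ∀ m, Set.Infinite { k | c (autRun q0 d ρ k) = m } → n ≤ m }

/-- Finite-memory strategies: realised by a finite stochastic Moore machine. -/
def FiniteMemory {p : G.P} (σ : G.Strategy p) : Prop :=
  ∃ (M : Type) (_ : Fintype M) (m0 : M) (upd : M → G.S → M)
    (out : M → (s : G.S) → G.Mixed p s),
    ∀ l : List G.S, σ l = out (l.foldl upd m0) (G.lastS l)

end ConcGame

section Stmt3Aux
open ConcGame MeasureTheory
open scoped ENNReal

variable {G : ConcGame}

/-! ### List layer -/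

lemma lastS_concat (L : List G.S) (s' : G.S) : G.lastS (L ++ [s']) = s' := by
  simp [ConcGame.lastS]

lemma cyl_empty : G.Cyl ([] : List G.S) = Set.univ := by
  ext ρ; simp [ConcGame.Cyl]

lemma prefixList_length (ρ : G.Run) (k : ℕ) : (G.prefixList ρ k).length = k + 1 := by
  simp [ConcGame.prefixList]

lemma prefixList_ne_nil (ρ : G.Run) (k : ℕ) : G.prefixList ρ k ≠ [] := by
  intro h
  have := prefixList_length (G := G) ρ k
  rw [h] at this; simp at this

lemma prefixList_getD (ρ : G.Run) (k i : ℕ) (hi : i ≤ k) :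
    (G.prefixList ρ k).getD i G.init = ρ i := by
  rw [ConcGame.prefixList]
  rw [List.getD_eq_getElem?_getD]
  rw [List.getElem?_map]
  rw [List.getElem?_range (by omega : i < k + 1)]
  rfl

lemma take_prefixList (ρ : G.Run) (k i : ℕ) (hi : i ≤ k) :
    (G.prefixList ρ k).take (i + 1) = G.prefixList ρ i := by
  rw [ConcGame.prefixList, ConcGame.prefixList, ← List.map_take, List.take_range]
  have : min (i + 1) (k + 1) = i + 1 := by omega
  rw [this]

lemma mem_cyl_iff (ρ : G.Run) (L : List G.S) :
    ρ ∈ G.Cyl L ↔ ∀ i, i < L.length → ρ i = L.getD i G.init := Iff.rfl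

lemma eq_prefixList_of_mem_cyl {ρ : G.Run} {L : List G.S} (hL : L ≠ [])
    (h : ρ ∈ G.Cyl L) : L = G.prefixList ρ (L.length - 1) := by
  have hlen : 0 < L.length := List.length_pos_iff.2 hL
  apply List.ext_getElem
  · rw [prefixList_length]; omega
  · intro i hi _
    have h1 := h i hi
    have h2 := prefixList_getD (G := G) ρ (L.length - 1) i (by omega)
    have h3 : L.getD i G.init = L[i] := List.getD_eq_getElem L G.init hi
    have hi2 : i < (G.prefixList ρ (L.length - 1)).length := by
      rw [prefixList_length]; omega
    have h4 : (G.prefixList ρ (L.length - 1)).getD i G.init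
        = (G.prefixList ρ (L.length - 1))[i] :=
      List.getD_eq_getElem _ G.init hi2
    rw [← h4, h2, ← h3]
    exact h1.symm

lemma prefix_of_mem_cyl {ρ : G.Run} {L M : List G.S} (hL : ρ ∈ G.Cyl L)
    (hM : ρ ∈ G.Cyl M) (hlen : L.length ≤ M.length) : L <+: M := by
  rcases eq_or_ne L [] with rfl | hLne
  · exact List.nil_prefix
  have hMne : M ≠ [] := by
    intro h; subst h; simp only [List.length_nil, Nat.le_zero] at hlen
    exact hLne (List.length_eq_zero_iff.1 hlen)
  rw [eq_prefixList_of_mem_cyl hLne hL, eq_prefixList_of_mem_cyl hMne hM]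
  have : (L.length - 1) + 1 ≤ (M.length - 1) + 1 := by
    have := List.length_pos_iff.2 hLne; omega
  rw [← take_prefixList (G := G) ρ (M.length - 1) (L.length - 1)
    (by have := List.length_pos_iff.2 hLne; have := List.length_pos_iff.2 hMne; omega)]
  exact List.take_prefix _ _

lemma cyl_mono {L M : List G.S} (h : L <+: M) : G.Cyl M ⊆ G.Cyl L := by
  intro ρ hρ i hi
  have hiM : i < M.length := lt_of_lt_of_le hi h.length_le
  rw [hρ i hiM]
  obtain ⟨t, rfl⟩ := h
  rw [List.getD_eq_getElem?_getD, List.getD_eq_getElem?_getD]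
  rw [List.getElem?_append_left hi]

lemma cyl_disjoint {L M : List G.S} (hLM : ¬ L <+: M) (hML : ¬ M <+: L) :
    G.Cyl L ∩ G.Cyl M = ∅ := by
  ext ρ; simp only [Set.mem_inter_iff, Set.mem_empty_iff_false, iff_false]
  rintro ⟨h1, h2⟩
  rcases le_total L.length M.length with h | h
  · exact hLM (prefix_of_mem_cyl h1 h2 h)
  · exact hML (prefix_of_mem_cyl h2 h1 h)

lemma mem_cyl_prefixList (ρ : G.Run) (k : ℕ) : ρ ∈ G.Cyl (G.prefixList ρ k) := by
  intro i hi
  rw [prefixList_length] at hi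
  exact (prefixList_getD (G := G) ρ k i (by omega)).symm

/-! ### stepProb / cylProb layer -/

lemma stepProb_nonneg (s : G.S) (F : G.P → G.A → ℝ) (hF : ∀ q a, 0 ≤ F q a) (s' : G.S) :
    0 ≤ G.stepProb s F s' := by
  apply Finset.sum_nonneg
  intro m _
  exact Finset.prod_nonneg fun q _ => hF q (m q)

lemma stepProb_sum (s : G.S) (F : G.P → G.A → ℝ) (hF : ∀ q, ∑ a, F q a = 1) :
    ∑ s', G.stepProb s F s' = 1 := by
  simp only [ConcGame.stepProb]
  rw [Finset.sum_fiberwise_of_maps_to (fun m _ => Finset.mem_univ (G.tr s m))]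
  rw [← Fintype.piFinset_univ, ← Finset.prod_univ_sum]
  simp [hF]

lemma cylProb_nonneg (σv : G.Profile) (L : List G.S) : 0 ≤ G.cylProb σv L := by
  apply Finset.prod_nonneg
  intro i _
  exact stepProb_nonneg _ _ (fun q a => ((σv q _).2.1 a)) _

lemma cylProb_congr {σv₁ σv₂ : G.Profile} {L : List G.S}
    (h : ∀ M, M <+: L → M ≠ L → ∀ q, σv₁ q M = σv₂ q M) :
    G.cylProb σv₁ L = G.cylProb σv₂ L := by
  apply Finset.prod_congr rfl
  intro i hi
  rw [Finset.mem_range] at hi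
  have hpre : L.take (i + 1) <+: L := List.take_prefix _ _
  have hne : L.take (i + 1) ≠ L := by
    intro he
    have : (L.take (i + 1)).length = L.length := by rw [he]
    rw [List.length_take] at this
    omega
  have := h (L.take (i + 1)) hpre hne
  congr 1
  funext q
  rw [this q]

lemma cylProb_append (σv : G.Profile) (L : List G.S) (hL : L ≠ []) (s' : G.S) :
    G.cylProb σv (L ++ [s']) = G.cylProb σv L *
      G.stepProb (G.lastS L) (fun q => (σv q L).1) s' := by
  have hn : 0 < L.length := List.length_pos_iff.2 hL
  simp only [ConcGame.cylProb, List.length_append, List.length_singleton]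
  have h1 : L.length + 1 - 1 = (L.length - 1) + 1 := by omega
  rw [h1, Finset.prod_range_succ]
  congr 1
  · apply Finset.prod_congr rfl
    intro i hi
    rw [Finset.mem_range] at hi
    have e1 : (L ++ [s']).take (i+1) = L.take (i+1) :=
      List.take_append_of_le_length (by omega)
    have e2 : (L ++ [s']).take (i+2) = L.take (i+2) :=
      List.take_append_of_le_length (by omega)
    rw [e1, e2]
  · have e1 : (L ++ [s']).take (L.length - 1 + 1) = L := by
      rw [List.take_append_of_le_length (by omega)]
      exact List.take_of_length_le (by omega)
    have e2 : (L ++ [s']).take (L.length - 1 + 2) = L ++ [s'] := by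
      apply List.take_of_length_le
      simp only [List.length_append, List.length_singleton]; omega
    rw [e1, e2, lastS_concat]

lemma cylProb_prefix_pos (σv : G.Profile) {L M : List G.S} (h : M <+: L)
    (hpos : 0 < G.cylProb σv L) : 0 < G.cylProb σv M := by
  have hfac : ∀ i ∈ Finset.range (L.length - 1),
      0 < G.stepProb (G.lastS (L.take (i+1))) (fun q => (σv q (L.take (i+1))).1)
        (G.lastS (L.take (i+2))) := by
    intro i hi
    rcases lt_or_eq_of_le (stepProb_nonneg (G := G) _ _
      (fun q a => ((σv q _).2.1 a)) _) with h' | h'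
    · exact h'
    · exfalso
      have : G.cylProb σv L = 0 := Finset.prod_eq_zero hi h'.symm
      rw [this] at hpos; exact lt_irrefl _ hpos
  obtain ⟨t, rfl⟩ := h
  apply Finset.prod_pos
  intro i hi
  rw [Finset.mem_range] at hi
  have e1 : (M ++ t).take (i+1) = M.take (i+1) :=
    List.take_append_of_le_length (by omega)
  have e2 : (M ++ t).take (i+2) = M.take (i+2) :=
    List.take_append_of_le_length (by omega)
  have := hfac i (by
    rw [Finset.mem_range, List.length_append]
    omega)
  rw [e1, e2] at this
  exact this

lemma cylProb_sub_congr {σv₁ σv₂ : G.Profile} {K : List G.S} (hK : K ≠ [])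
    (h : ∀ M, K <+: M → ∀ q, σv₁ q M = σv₂ q M) (t : List G.S) :
    G.cylProb σv₁ (K ++ t) * G.cylProb σv₂ K
      = G.cylProb σv₂ (K ++ t) * G.cylProb σv₁ K := by
  induction t using List.reverseRecOn with
  | nil => simp [mul_comm]
  | append_singleton t z ih =>
      rw [← List.append_assoc]
      have hKt : K ++ t ≠ [] := by
        simp only [ne_eq, List.append_eq_nil_iff]
        rintro ⟨rfl, -⟩; exact hK rfl
      rw [cylProb_append σv₁ (K ++ t) hKt z, cylProb_append σv₂ (K ++ t) hKt z]
      have hm : ∀ q, σv₁ q (K ++ t) = σv₂ q (K ++ t) := h _ ⟨t, rfl⟩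
      have hfm : (fun q => (σv₁ q (K ++ t)).1) = fun q => (σv₂ q (K ++ t)).1 := by
        funext q; rw [hm q]
      rw [hfm]
      linear_combination (G.stepProb (G.lastS (K ++ t)) (fun q => (σv₂ q (K ++ t)).1) z) * ih

lemma stepProb_eq_zero_of_not_step (s s' : G.S) (F : G.P → G.A → ℝ)
    (hsupp : ∀ q a, F q a ≠ 0 → a ∈ G.act q s) (h : ¬ G.Step s s') :
    G.stepProb s F s' = 0 := by
  simp only [ConcGame.stepProb]
  apply Finset.sum_eq_zero
  intro m hm
  rw [Finset.mem_filter] at hm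
  by_contra hne
  have hq : ∀ q, F q (m q) ≠ 0 := by
    intro q h0
    exact hne (Finset.prod_eq_zero (Finset.mem_univ q) h0)
  exact h ⟨m, fun q => hsupp q (m q) (hq q), hm.2⟩

lemma isHistory_append {L : List G.S} (hL : L ≠ []) (s' : G.S) :
    G.IsHistory (L ++ [s']) ↔ G.IsHistory L ∧ G.Step (G.lastS L) s' := by
  have hhead : (L ++ [s']).head? = L.head? := by
    obtain ⟨x, L', rfl⟩ := List.exists_cons_of_ne_nil hL
    simp
  have hlast : L.getLast? = some (G.lastS L) := by
    rw [ConcGame.lastS, List.getLast?_eq_getLast hL]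
    rfl
  unfold ConcGame.IsHistory
  rw [hhead]
  unfold List.Chain'
  rw [List.isChain_append]
  simp only [List.isChain_singleton, true_and]
  constructor
  · rintro ⟨h1, h2, h3⟩
    refine ⟨⟨h1, h2⟩, ?_⟩
    exact h3 _ (by rw [Option.mem_def, hlast]) s' (by simp)
  · rintro ⟨⟨h1, h2⟩, h3⟩
    refine ⟨h1, h2, ?_⟩
    intro a ha b hb
    simp only [List.head?_cons, Option.mem_def, Option.some.injEq] at hb
    subst hb
    rw [Option.mem_def, hlast] at ha
    cases ha
    exact h3

lemma cylProb_singleton (σv : G.Profile) (x : G.S) : G.cylProb σv [x] = 1 := by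
  simp [ConcGame.cylProb]

lemma isHistory_singleton (x : G.S) : G.IsHistory [x] ↔ x = G.init := by
  unfold ConcGame.IsHistory
  simp [List.Chain']

lemma sum_cylProb_eq_one (σv : G.Profile) : ∀ n : ℕ,
    ∑ f : Fin (n+1) → G.S,
      (if G.IsHistory (List.ofFn f) then G.cylProb σv (List.ofFn f) else 0) = 1 := by
  intro n
  induction n with
  | zero =>
      rw [← Equiv.sum_comp (Equiv.funUnique (Fin 1) G.S).symm]
      have : ∀ x : G.S, List.ofFn ((Equiv.funUnique (Fin 1) G.S).symm x) = [x] := by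
        intro x
        simp [Equiv.funUnique, List.ofFn_succ]
      simp only [this, isHistory_singleton, cylProb_singleton]
      simp
  | succ n ih =>
      rw [← Equiv.sum_comp (Fin.snocEquiv (fun _ => G.S))]
      rw [Fintype.sum_prod_type]
      rw [Finset.sum_comm]
      have key : ∀ (g : Fin (n+1) → G.S) (x : G.S),
          List.ofFn (Fin.snocEquiv (fun _ => G.S) (x, g)) = List.ofFn g ++ [x] := by
        intro g x
        rw [List.ofFn_succ']
        simp only [Fin.snocEquiv_apply]
        rw [List.concat_eq_append]
        congr 1
        · congr 1
          funext i
          simp [Fin.snoc_castSucc]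
        · simp
      calc ∑ g : Fin (n+1) → G.S, ∑ x : G.S,
            (if G.IsHistory (List.ofFn (Fin.snocEquiv (fun _ => G.S) (x, g)))
              then G.cylProb σv (List.ofFn (Fin.snocEquiv (fun _ => G.S) (x, g))) else 0)
          = ∑ g : Fin (n+1) → G.S,
            (if G.IsHistory (List.ofFn g) then G.cylProb σv (List.ofFn g) else 0) := by
            apply Finset.sum_congr rfl
            intro g _
            have hne : List.ofFn g ≠ [] := by
              intro h
              have := congrArg List.length h
              simp at this
            rcases Classical.em (G.IsHistory (List.ofFn g)) with hh | hh
            · calc ∑ x : G.S, (if G.IsHistory (List.ofFn (Fin.snocEquiv (fun _ => G.S) (x, g)))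
                    then G.cylProb σv (List.ofFn (Fin.snocEquiv (fun _ => G.S) (x, g))) else 0)
                  = ∑ x : G.S, G.cylProb σv (List.ofFn g) *
                      G.stepProb (G.lastS (List.ofFn g)) (fun q => (σv q (List.ofFn g)).1) x := by
                    apply Finset.sum_congr rfl
                    intro x _
                    rw [key g x, isHistory_append hne, cylProb_append σv _ hne]
                    rcases Classical.em (G.Step (G.lastS (List.ofFn g)) x) with hs | hs
                    · rw [if_pos ⟨hh, hs⟩]
                    · rw [if_neg (by tauto)]
                      rw [stepProb_eq_zero_of_not_step _ _ _
                        (fun q a => (σv q (List.ofFn g)).2.2.2 a) hs]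
                      ring
                _ = G.cylProb σv (List.ofFn g) := by
                    rw [← Finset.mul_sum]
                    rw [stepProb_sum _ _ (fun q => (σv q (List.ofFn g)).2.2.1)]
                    ring
                _ = _ := by rw [if_pos hh]
            · rw [if_neg hh]
              apply Finset.sum_eq_zero
              intro x _
              rw [key g x, if_neg]
              rw [isHistory_append hne]
              tauto
        _ = 1 := ih

/-! ### Measure layer -/

lemma measurableSet_cyl (L : List G.S) : MeasurableSet (G.Cyl L) := by
  have : G.Cyl L = ⋂ i ∈ Finset.range L.length,
      (fun ρ : G.Run => ρ i) ⁻¹' {L.getD i G.init} := by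
    ext ρ
    simp [ConcGame.Cyl, Set.mem_iInter]
  rw [this]
  apply MeasurableSet.biInter (Set.to_countable _)
  intro i _
  exact measurable_pi_apply i MeasurableSpace.measurableSet_top

def cylSets (G : ConcGame) : Set (Set G.Run) := {U | ∃ L : List G.S, U = G.Cyl L}

lemma generateFrom_cylSets :
    (inferInstance : MeasurableSpace G.Run) = .generateFrom (cylSets G) := by
  apply le_antisymm
  · apply iSup_le
    intro i
    intro s hs
    obtain ⟨A, -, rfl⟩ := hs
    have : (fun ρ : G.Run => ρ i) ⁻¹' A =
        ⋃ (f : Fin (i+1) → G.S) (_ : f ⟨i, Nat.lt_succ_self i⟩ ∈ A), G.Cyl (List.ofFn f) := by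
      ext ρ
      simp only [Set.mem_preimage, Set.mem_iUnion]
      constructor
      · intro hρ
        refine ⟨fun j => ρ j, by simpa using hρ, ?_⟩
        intro j hj
        rw [List.getD_eq_getElem _ _ (by simpa using hj)]
        simp only [List.getElem_ofFn]
      · rintro ⟨f, hf, hρ⟩
        have := hρ i (by simp)
        rw [List.getD_eq_getElem _ _ (by simp)] at this
        simp only [List.getElem_ofFn] at this
        rw [this]
        exact hf
    rw [this]
    apply MeasurableSet.iUnion
    intro f
    apply MeasurableSet.iUnion
    intro _
    exact MeasurableSpace.measurableSet_generateFrom ⟨List.ofFn f, rfl⟩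
  · apply MeasurableSpace.generateFrom_le
    rintro _ ⟨L, rfl⟩
    exact measurableSet_cyl L

lemma isPiSystem_cylSets : IsPiSystem (cylSets G) := by
  rintro U ⟨L, rfl⟩ V ⟨M, rfl⟩ hne
  obtain ⟨ρ, hρL, hρM⟩ := hne
  rcases le_total L.length M.length with h | h
  · exact ⟨M, by rw [Set.inter_eq_right.2 (cyl_mono (prefix_of_mem_cyl hρL hρM h))]⟩
  · exact ⟨L, by rw [Set.inter_eq_left.2 (cyl_mono (prefix_of_mem_cyl hρM hρL h))]⟩

lemma cyl_ofFn_cover (n : ℕ) : (⋃ f : Fin (n+1) → G.S, G.Cyl (List.ofFn f)) = Set.univ := by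
  ext ρ
  simp only [Set.mem_iUnion, Set.mem_univ, iff_true]
  refine ⟨fun j => ρ j, ?_⟩
  intro j hj
  rw [List.getD_eq_getElem _ _ (by simpa using hj)]
  simp only [List.getElem_ofFn]

lemma cyl_ofFn_disjoint (n : ℕ) :
    Pairwise (Function.onFun Disjoint (fun f : Fin (n+1) → G.S => G.Cyl (List.ofFn f))) := by
  intro f g hfg
  rw [Function.onFun, Set.disjoint_iff_inter_eq_empty]
  by_contra hne
  obtain ⟨ρ, hρf, hρg⟩ := Set.nonempty_iff_ne_empty.2 hne
  apply hfg
  funext j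
  have h1 := hρf j (by simpa using j.is_le)
  have h2 := hρg j (by simpa using j.is_le)
  rw [List.getD_eq_getElem _ _ (by simpa using j.is_le)] at h1 h2
  simp only [List.getElem_ofFn] at h1 h2
  rw [← h1, ← h2]

lemma ofFn_getD (L : List G.S) (hL : L ≠ []) :
    List.ofFn (fun i : Fin (L.length - 1 + 1) => L.getD i G.init) = L := by
  have hlen : 0 < L.length := List.length_pos_iff.2 hL
  apply List.ext_getElem
  · simp; omega
  · intro i h1 h2
    simp only [List.getElem_ofFn]
    rw [List.getD_eq_getElem _ _ h2]

variable {Pr : G.Profile → Measure G.Run}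

lemma prob_cyl (hPr : G.ValidPr Pr) (σv : G.Profile) (L : List G.S) (hL : L ≠ []) :
    Pr σv (G.Cyl L) = ENNReal.ofReal (if G.IsHistory L then G.cylProb σv L else 0) := by
  rcases Classical.em (G.IsHistory L) with hh | hh
  · rw [if_pos hh]
    exact hPr.2 σv L hh
  · rw [if_neg hh, ENNReal.ofReal_zero]
    haveI := hPr.1 σv
    set n := L.length - 1 with hn
    have hsum : ∑ f : Fin (n+1) → G.S, Pr σv (G.Cyl (List.ofFn f)) = 1 := by
      rw [← tsum_fintype (L := SummationFilter.unconditional _)]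
      rw [← MeasureTheory.measure_iUnion (cyl_ofFn_disjoint n) (fun f => measurableSet_cyl _)]
      rw [cyl_ofFn_cover]
      exact measure_univ
    have hsplit := Finset.sum_filter_add_sum_filter_not Finset.univ
      (fun f : Fin (n+1) → G.S => G.IsHistory (List.ofFn f))
      (fun f => Pr σv (G.Cyl (List.ofFn f)))
    have hhist : ∑ f ∈ Finset.univ.filter
        (fun f : Fin (n+1) → G.S => G.IsHistory (List.ofFn f)),
        Pr σv (G.Cyl (List.ofFn f)) = 1 := by
      have h1 : ∀ f ∈ Finset.univ.filter
          (fun f : Fin (n+1) → G.S => G.IsHistory (List.ofFn f)),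
          Pr σv (G.Cyl (List.ofFn f)) = ENNReal.ofReal (G.cylProb σv (List.ofFn f)) := by
        intro f hf
        rw [Finset.mem_filter] at hf
        exact hPr.2 σv _ hf.2
      rw [Finset.sum_congr rfl h1]
      rw [← ENNReal.ofReal_sum_of_nonneg (fun f _ => cylProb_nonneg σv _)]
      have h2 : ∑ f ∈ Finset.univ.filter
          (fun f : Fin (n+1) → G.S => G.IsHistory (List.ofFn f)),
          G.cylProb σv (List.ofFn f)
          = ∑ f : Fin (n+1) → G.S,
            (if G.IsHistory (List.ofFn f) then G.cylProb σv (List.ofFn f) else 0) := by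
        rw [Finset.sum_filter]
      rw [h2, sum_cylProb_eq_one σv n, ENNReal.ofReal_one]
    have hnonhist : ∑ f ∈ Finset.univ.filter
        (fun f : Fin (n+1) → G.S => ¬ G.IsHistory (List.ofFn f)),
        Pr σv (G.Cyl (List.ofFn f)) = 0 := by
      have := hsplit.trans hsum
      rw [hhist] at this
      by_contra hx
      have h3 : (1 : ℝ≥0∞) < 1 + ∑ f ∈ Finset.univ.filter
          (fun f : Fin (n+1) → G.S => ¬ G.IsHistory (List.ofFn f)),
          Pr σv (G.Cyl (List.ofFn f)) :=
        ENNReal.lt_add_right ENNReal.one_ne_top hx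
      rw [this] at h3
      exact lt_irrefl _ h3
    have hmem : (fun i : Fin (n+1) => L.getD i G.init) ∈ Finset.univ.filter
        (fun f : Fin (n+1) → G.S => ¬ G.IsHistory (List.ofFn f)) := by
      rw [Finset.mem_filter]
      refine ⟨Finset.mem_univ _, ?_⟩
      rw [hn, ofFn_getD L hL]
      exact hh
    have := (Finset.sum_eq_zero_iff.1 hnonhist) _ hmem
    rw [hn, ofFn_getD L hL] at this
    exact this

lemma measure_ext_cyl {μ ν : Measure G.Run} [IsFiniteMeasure μ]
    (h : ∀ L : List G.S, μ (G.Cyl L) = ν (G.Cyl L)) : μ = ν := by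
  apply MeasureTheory.ext_of_generate_finite _ generateFrom_cylSets isPiSystem_cylSets
  · rintro _ ⟨L, rfl⟩
    exact h L
  · have := h []
    rwa [cyl_empty] at this

/-! ### Surgeries and winning decomposition -/

def updS (p : G.P) (l : List G.S) (σ : G.Strategy p) (β : G.Mixed p (G.lastS l)) :
    G.Strategy p :=
  fun h => if e : h = l then e.symm ▸ β else σ h

lemma updS_self (σ : G.Strategy p) (β : G.Mixed p (G.lastS l)) : updS p l σ β l = β := by
  simp [updS]

lemma updS_ne (σ : G.Strategy p) (β : G.Mixed p (G.lastS l)) {h : List G.S} (hh : h ≠ l) :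
    updS p l σ β h = σ h := dif_neg hh

lemma updS_updS (σ : G.Strategy p) (β β' : G.Mixed p (G.lastS l)) :
    updS p l (updS p l σ β) β' = updS p l σ β' := by
  funext h
  by_cases hh : h = l
  · subst hh; rw [updS_self, updS_self]
  · rw [updS_ne _ _ hh, updS_ne _ _ hh, updS_ne _ _ hh]

lemma updS_eq_self (σ : G.Strategy p) : updS p l σ (σ l) = σ := by
  funext h
  by_cases hh : h = l
  · subst hh; rw [updS_self]
  · rw [updS_ne _ _ hh]

lemma combine_p (σ : G.Strategy p) (τ : G.CoStrategy p) : G.combine σ τ p = σ := by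
  simp [ConcGame.combine]

lemma combine_ne (σ : G.Strategy p) (τ : G.CoStrategy p) {q : G.P} (hq : q ≠ p) :
    G.combine σ τ q = τ q hq := by
  simp [ConcGame.combine, hq]

def WinsIn (G : ConcGame) (win : G.P → Set G.Run) (Pr : G.Profile → Measure G.Run)
    (st : Sem) (p : G.P) (σv : G.Profile) (U : Set G.Run) : Prop :=
  match st with
  | Sem.Sure => G.Outcome σv ∩ U ⊆ win p
  | Sem.Almost => Pr σv ((win p)ᶜ ∩ U) = 0

lemma mem_outcome_iff (σv : G.Profile) (ρ : G.Run) :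
    ρ ∈ G.Outcome σv ↔ ∀ k, G.IsHistory (G.prefixList ρ k) ∧
      0 < G.cylProb σv (G.prefixList ρ k) := by
  simp [ConcGame.Outcome, ConcGame.HistOf]

lemma mem_cyl_append {ρ : G.Run} {L : List G.S} (h : ρ ∈ G.Cyl L) :
    ρ ∈ G.Cyl (L ++ [ρ L.length]) := by
  intro i hi
  rw [List.length_append, List.length_singleton] at hi
  rcases Nat.lt_or_ge i L.length with hi' | hi'
  · rw [List.getD_eq_getElem?_getD, List.getElem?_append_left hi',
      ← List.getD_eq_getElem?_getD]
    exact h i hi'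
  · have : i = L.length := by omega
    subst this
    rw [List.getD_eq_getElem?_getD, List.getElem?_append_right (le_refl _)]
    simp

lemma cyl_cover_succ (L : List G.S) : G.Cyl L ⊆ ⋃ s', G.Cyl (L ++ [s']) := by
  intro ρ hρ
  rw [Set.mem_iUnion]
  exact ⟨ρ L.length, mem_cyl_append hρ⟩

variable {win : G.P → Set G.Run} {Pr : G.Profile → Measure G.Run} {st : Sem}
  {p : G.P} {l : List G.S}

lemma wins_decomp (hwin : ∀ p, MeasurableSet (win p)) (hPr : G.ValidPr Pr) (σv : G.Profile) :
    G.Wins Pr st σv (win p) ↔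
      (WinsIn G win Pr st p σv ((G.Cyl l)ᶜ) ∧
        ∀ s', WinsIn G win Pr st p σv (G.Cyl (l ++ [s']))) := by
  cases st
  case Sure =>
    show G.Outcome σv ⊆ win p ↔ _
    unfold WinsIn
    constructor
    · intro h
      exact ⟨fun ρ hρ => h hρ.1, fun s' ρ hρ => h hρ.1⟩
    · rintro ⟨h1, h2⟩ ρ hρ
      rcases Classical.em (ρ ∈ G.Cyl l) with hc | hc
      · exact h2 (ρ l.length) ⟨hρ, mem_cyl_append hc⟩
      · exact h1 ⟨hρ, hc⟩
  case Almost =>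
    show Pr σv (win p) = 1 ↔ _
    unfold WinsIn
    haveI := hPr.1 σv
    rw [← prob_compl_eq_zero_iff (hwin p)]
    constructor
    · intro h
      exact ⟨measure_mono_null Set.inter_subset_left h,
        fun s' => measure_mono_null Set.inter_subset_left h⟩
    · rintro ⟨h1, h2⟩
      have hcover : (win p)ᶜ ⊆ ((win p)ᶜ ∩ (G.Cyl l)ᶜ) ∪
          ⋃ s', ((win p)ᶜ ∩ G.Cyl (l ++ [s'])) := by
        intro x hx
        rcases Classical.em (x ∈ G.Cyl l) with hc | hc
        · right
          rw [Set.mem_iUnion]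
          exact ⟨x l.length, hx, mem_cyl_append hc⟩
        · left; exact ⟨hx, hc⟩
      apply measure_mono_null hcover
      apply measure_union_null h1
      rw [measure_iUnion_null_iff]
      exact h2

lemma cylProb_eq_zero_of_prefix {σv : G.Profile} {M L : List G.S} (h : M <+: L)
    (hz : G.cylProb σv M = 0) : G.cylProb σv L = 0 := by
  by_contra hne
  have : 0 < G.cylProb σv L :=
    lt_of_le_of_ne (cylProb_nonneg σv L) (Ne.symm hne)
  have := cylProb_prefix_pos σv h this
  rw [hz] at this
  exact lt_irrefl _ this

lemma winsIn_of_reach_zero (hPr : G.ValidPr Pr) (σv : G.Profile) (s' : G.S)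
    (hz : G.cylProb σv (l ++ [s']) = 0) :
    WinsIn G win Pr st p σv (G.Cyl (l ++ [s'])) := by
  cases st
  case Sure =>
    rintro ρ ⟨hρO, hρC⟩
    exfalso
    have hKne : l ++ [s'] ≠ [] := by simp
    have := (mem_outcome_iff σv ρ).1 hρO ((l ++ [s']).length - 1)
    rw [← eq_prefixList_of_mem_cyl hKne hρC] at this
    rw [hz] at this
    exact lt_irrefl _ this.2
  case Almost =>
    apply measure_mono_null Set.inter_subset_right
    rw [prob_cyl hPr σv _ (by simp)]
    rcases Classical.em (G.IsHistory (l ++ [s'])) with hh | hh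
    · rw [if_pos hh, hz, ENNReal.ofReal_zero]
    · rw [if_neg hh, ENNReal.ofReal_zero]

lemma cylProb_congr_off {σv₁ σv₂ : G.Profile}
    (hag : ∀ M, ¬ l <+: M → ∀ q, σv₁ q M = σv₂ q M) {L : List G.S} (hL : ¬ l <+: L) :
    G.cylProb σv₁ L = G.cylProb σv₂ L := by
  apply cylProb_congr
  intro M hM _ q
  apply hag
  intro hc
  exact hL (hc.trans hM)

lemma not_prefix_prefixList {ρ : G.Run} (hρ : ρ ∉ G.Cyl l) (k : ℕ) :
    ¬ l <+: G.prefixList ρ k := by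
  intro h
  exact hρ (cyl_mono h (mem_cyl_prefixList ρ k))

lemma winsIn_off_congr (hwin : ∀ p, MeasurableSet (win p)) (hPr : G.ValidPr Pr)
    {σv₁ σv₂ : G.Profile}
    (hag : ∀ M, ¬ l <+: M → ∀ q, σv₁ q M = σv₂ q M) :
    WinsIn G win Pr st p σv₁ ((G.Cyl l)ᶜ) ↔ WinsIn G win Pr st p σv₂ ((G.Cyl l)ᶜ) := by
  cases st
  case Sure =>
    unfold WinsIn
    have hout : G.Outcome σv₁ ∩ (G.Cyl l)ᶜ = G.Outcome σv₂ ∩ (G.Cyl l)ᶜ := by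
      ext ρ
      simp only [Set.mem_inter_iff, Set.mem_compl_iff]
      constructor <;> rintro ⟨h1, h2⟩ <;> refine ⟨?_, h2⟩ <;>
        rw [mem_outcome_iff] at h1 ⊢ <;> intro k <;> obtain ⟨ha, hb⟩ := h1 k <;>
        refine ⟨ha, ?_⟩
      · rwa [← cylProb_congr_off hag (not_prefix_prefixList h2 k)]
      · rwa [cylProb_congr_off hag (not_prefix_prefixList h2 k)]
    rw [hout]
  case Almost =>
    show Pr σv₁ ((win p)ᶜ ∩ (G.Cyl l)ᶜ) = 0 ↔ Pr σv₂ ((win p)ᶜ ∩ (G.Cyl l)ᶜ) = 0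
    haveI := hPr.1 σv₁
    haveI := hPr.1 σv₂
    have hmu : (Pr σv₁).restrict ((G.Cyl l)ᶜ) = (Pr σv₂).restrict ((G.Cyl l)ᶜ) := by
      apply measure_ext_cyl
      intro L
      rw [Measure.restrict_apply (measurableSet_cyl L),
        Measure.restrict_apply (measurableSet_cyl L)]
      rcases Classical.em (l <+: L) with hc | hc
      · have : G.Cyl L ∩ (G.Cyl l)ᶜ = ∅ := by
          rw [← Set.diff_eq, Set.diff_eq_empty]
          exact cyl_mono hc
        rw [this, measure_empty, measure_empty]
      · rcases Classical.em (L <+: l) with hc2 | hc2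
        · have hsub : G.Cyl l ⊆ G.Cyl L := cyl_mono hc2
          have hd : G.Cyl L ∩ (G.Cyl l)ᶜ = G.Cyl L \ G.Cyl l := (Set.diff_eq _ _).symm
          have hPl : Pr σv₁ (G.Cyl l) = Pr σv₂ (G.Cyl l) := by
            rcases eq_or_ne l [] with rfl | hlne
            · rw [cyl_empty, measure_univ, measure_univ]
            · rw [prob_cyl hPr σv₁ l hlne, prob_cyl hPr σv₂ l hlne]
              congr 2
              apply cylProb_congr
              intro M hM hMne q
              apply hag
              intro hcon
              exact hMne ((hcon.eq_of_length (le_antisymm hcon.length_le hM.length_le)).symm)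
          have hPL : Pr σv₁ (G.Cyl L) = Pr σv₂ (G.Cyl L) := by
            rcases eq_or_ne L [] with rfl | hLne
            · rw [cyl_empty]; rw [measure_univ, measure_univ]
            · rw [prob_cyl hPr σv₁ L hLne, prob_cyl hPr σv₂ L hLne]
              congr 2
              exact cylProb_congr_off hag hc
          rw [hd, measure_diff hsub (measurableSet_cyl l).nullMeasurableSet
              (measure_ne_top _ _),
            measure_diff hsub (measurableSet_cyl l).nullMeasurableSet (measure_ne_top _ _),
            hPl, hPL]
        · have : G.Cyl L ∩ (G.Cyl l)ᶜ = G.Cyl L := by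
            apply Set.inter_eq_left.2
            intro x hx
            rw [Set.mem_compl_iff]
            intro hx2
            have hdis := cyl_disjoint hc2 hc
            rw [Set.eq_empty_iff_forall_notMem] at hdis
            exact hdis x ⟨hx, hx2⟩
          rw [this]
          have hLne : L ≠ [] := by
            rintro rfl
            exact hc2 (List.nil_prefix)
          rw [prob_cyl hPr σv₁ L hLne, prob_cyl hPr σv₂ L hLne]
          congr 2
          exact cylProb_congr_off hag hc
    have e1 : Pr σv₁ ((win p)ᶜ ∩ (G.Cyl l)ᶜ) =
        (Pr σv₁).restrict ((G.Cyl l)ᶜ) ((win p)ᶜ) := by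
      rw [Measure.restrict_apply (hwin p).compl]
    have e2 : Pr σv₂ ((win p)ᶜ ∩ (G.Cyl l)ᶜ) =
        (Pr σv₂).restrict ((G.Cyl l)ᶜ) ((win p)ᶜ) := by
      rw [Measure.restrict_apply (hwin p).compl]
    rw [e1, e2, hmu]

lemma winsIn_sub_transfer (hwin : ∀ p, MeasurableSet (win p)) (hPr : G.ValidPr Pr)
    {σv₁ σv₂ : G.Profile} (s' : G.S)
    (hag : ∀ M, (l ++ [s']) <+: M → ∀ q, σv₁ q M = σv₂ q M)
    (hr : 0 < G.cylProb σv₁ (l ++ [s']) → 0 < G.cylProb σv₂ (l ++ [s']))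
    (h2 : WinsIn G win Pr st p σv₂ (G.Cyl (l ++ [s']))) :
    WinsIn G win Pr st p σv₁ (G.Cyl (l ++ [s'])) := by
  set K := l ++ [s'] with hK
  have hKne : K ≠ [] := by simp [hK]
  rcases Classical.em (0 < G.cylProb σv₁ K) with hr₁ | hr₁
  swap
  · exact winsIn_of_reach_zero hPr σv₁ s'
      (le_antisymm (le_of_not_gt hr₁) (cylProb_nonneg σv₁ K))
  have hr₂ : 0 < G.cylProb σv₂ K := hr hr₁
  cases st
  case Sure =>
    rintro ρ ⟨hρO, hρC⟩
    refine h2 ⟨?_, hρC⟩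
    rw [mem_outcome_iff] at hρO ⊢
    intro k
    obtain ⟨ha, hb⟩ := hρO k
    refine ⟨ha, ?_⟩
    have hρK : ρ ∈ G.Cyl K := hρC
    have hρP : ρ ∈ G.Cyl (G.prefixList ρ k) := mem_cyl_prefixList ρ k
    rcases le_total (G.prefixList ρ k).length K.length with hlen | hlen
    · have hpre : G.prefixList ρ k <+: K := prefix_of_mem_cyl hρP hρK hlen
      exact cylProb_prefix_pos σv₂ hpre hr₂
    · have hpre : K <+: G.prefixList ρ k := prefix_of_mem_cyl hρK hρP hlen
      obtain ⟨t, hteq⟩ := hpre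
      have hcross := cylProb_sub_congr hKne hag t
      rw [hteq] at hcross
      by_contra hz
      have hz' : G.cylProb σv₂ (G.prefixList ρ k) = 0 :=
        le_antisymm (le_of_not_gt hz) (cylProb_nonneg _ _)
      rw [hz'] at hcross
      have : G.cylProb σv₁ (G.prefixList ρ k) * G.cylProb σv₂ K = 0 := by
        rw [hcross]; ring
      rcases mul_eq_zero.1 this with h | h
      · rw [h] at hb; exact lt_irrefl _ hb
      · rw [h] at hr₂; exact lt_irrefl _ hr₂
  case Almost =>
    show Pr σv₁ ((win p)ᶜ ∩ G.Cyl K) = 0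
    have h2' : Pr σv₂ ((win p)ᶜ ∩ G.Cyl K) = 0 := h2
    haveI := hPr.1 σv₁
    haveI := hPr.1 σv₂
    set r₁ := G.cylProb σv₁ K with hr₁def
    set r₂ := G.cylProb σv₂ K with hr₂def
    have hmu : (ENNReal.ofReal r₂) • (Pr σv₁).restrict (G.Cyl K)
        = (ENNReal.ofReal r₁) • (Pr σv₂).restrict (G.Cyl K) := by
      haveI : IsFiniteMeasure ((ENNReal.ofReal r₂) • (Pr σv₁).restrict (G.Cyl K)) := by
        constructor
        rw [Measure.smul_apply, smul_eq_mul]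
        exact ENNReal.mul_lt_top ENNReal.ofReal_lt_top (measure_lt_top _ _)
      apply measure_ext_cyl
      intro L
      rw [Measure.smul_apply, Measure.smul_apply, smul_eq_mul, smul_eq_mul,
        Measure.restrict_apply (measurableSet_cyl L),
        Measure.restrict_apply (measurableSet_cyl L)]
      rcases Classical.em (K <+: L) with hc | hc
      · have hsub : G.Cyl L ∩ G.Cyl K = G.Cyl L := Set.inter_eq_left.2 (cyl_mono hc)
        rw [hsub]
        have hLne : L ≠ [] := by
          rintro rfl
          exact hKne (List.prefix_nil.1 hc)
        rw [prob_cyl hPr σv₁ L hLne, prob_cyl hPr σv₂ L hLne]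
        rcases Classical.em (G.IsHistory L) with hh | hh
        · rw [if_pos hh, if_pos hh]
          rw [← ENNReal.ofReal_mul (cylProb_nonneg σv₂ K),
            ← ENNReal.ofReal_mul (cylProb_nonneg σv₁ K)]
          congr 1
          obtain ⟨t, rfl⟩ := hc
          have hcross := cylProb_sub_congr hKne hag t
          rw [← hr₁def, ← hr₂def] at hcross
          linear_combination hcross
        · rw [if_neg hh, if_neg hh]
          simp
      · rcases Classical.em (L <+: K) with hc2 | hc2
        · have hsub : G.Cyl L ∩ G.Cyl K = G.Cyl K := Set.inter_eq_right.2 (cyl_mono hc2)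
          rw [hsub]
          rw [prob_cyl hPr σv₁ K hKne, prob_cyl hPr σv₂ K hKne]
          rcases Classical.em (G.IsHistory K) with hh | hh
          · rw [if_pos hh, if_pos hh,
              ← ENNReal.ofReal_mul (cylProb_nonneg σv₂ K),
              ← ENNReal.ofReal_mul (cylProb_nonneg σv₁ K)]
            congr 1
            rw [← hr₁def, ← hr₂def]
            ring
          · rw [if_neg hh, if_neg hh]
            simp
        · have hdis : G.Cyl L ∩ G.Cyl K = ∅ := cyl_disjoint hc2 hc
          rw [hdis]
          simp
    have := congrArg (fun μ : Measure G.Run => μ ((win p)ᶜ)) hmu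
    simp only [Measure.smul_apply, smul_eq_mul,
      Measure.restrict_apply (hwin p).compl] at this
    rw [h2', mul_zero] at this
    rcases mul_eq_zero.1 this with h | h
    · exfalso
      rw [ENNReal.ofReal_eq_zero] at h
      exact absurd h (not_le.2 hr₂)
    · exact h

lemma stepProb_linear (s : G.S) (F : G.P → G.A → ℝ) (s' : G.S) :
    G.stepProb s F s' = ∑ a : G.A, F p a *
      G.stepProb s (Function.update F p (fun b => if b = a then (1:ℝ) else 0)) s' := by
  have key : ∀ m : G.P → G.A,
      (∏ q, F q (m q)) = ∑ a : G.A, F p a *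
        ∏ q, (Function.update F p (fun b => if b = a then (1:ℝ) else 0)) q (m q) := by
    intro m
    rw [Finset.sum_eq_single (m p)]
    · have h1 : ∀ q ∈ Finset.univ.erase p,
          (Function.update F p (fun b => if b = m p then (1:ℝ) else 0)) q (m q)
            = F q (m q) := by
        intro q hq
        rw [Function.update_of_ne (Finset.ne_of_mem_erase hq)]
      rw [← Finset.mul_prod_erase Finset.univ _ (Finset.mem_univ p),
        ← Finset.mul_prod_erase Finset.univ _ (Finset.mem_univ p),
        Finset.prod_congr rfl h1, Function.update_self, if_pos rfl]
      ring
    · intro a _ ha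
      have h0 : (Function.update F p (fun b => if b = a then (1:ℝ) else 0)) p (m p) = 0 := by
        rw [Function.update_self, if_neg (fun h => ha h.symm)]
      rw [← Finset.mul_prod_erase Finset.univ _ (Finset.mem_univ p), h0]
      ring
    · intro h
      exact absurd (Finset.mem_univ (m p)) h
  simp only [ConcGame.stepProb]
  rw [Finset.sum_congr rfl (fun m _ => key m)]
  rw [Finset.sum_comm]
  apply Finset.sum_congr rfl
  intro a _
  rw [Finset.mul_sum]

/-! ### Support lemma (KEY1) -/

lemma isHistory_ne_nil (hl : G.IsHistory l) : l ≠ [] := by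
  rintro rfl
  simp [ConcGame.IsHistory] at hl

lemma moves_update (σ : G.Strategy p) (τ : G.CoStrategy p) (β : G.Mixed p (G.lastS l)) :
    (fun q => ((G.combine (updS p l σ β) τ) q l).1)
      = Function.update (fun q => ((G.combine σ τ) q l).1) p β.1 := by
  funext q
  by_cases hq : q = p
  · subst hq
    have h1 : G.combine (updS q l σ β) τ q = updS q l σ β := combine_p _ _
    have h2 : G.combine σ τ q = σ := combine_p _ _
    simp only [h1, h2, Function.update_self, updS_self]
  · have h1 : G.combine (updS p l σ β) τ q = τ q hq := combine_ne _ _ hq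
    have h2 : G.combine σ τ q = τ q hq := combine_ne _ _ hq
    simp only [h1, h2, Function.update_of_ne hq]

lemma combine_updS_agree (σ : G.Strategy p) (τ : G.CoStrategy p)
    (β : G.Mixed p (G.lastS l)) :
    ∀ M, M ≠ l → ∀ q, (G.combine (updS p l σ β) τ) q M = (G.combine σ τ) q M := by
  intro M hM q
  by_cases hq : q = p
  · subst hq
    rw [combine_p, combine_p, updS_ne _ _ hM]
  · rw [combine_ne _ _ hq, combine_ne _ _ hq]

lemma reach_updS (σ : G.Strategy p) (τ : G.CoStrategy p) (β : G.Mixed p (G.lastS l)) :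
    G.cylProb (G.combine (updS p l σ β) τ) l = G.cylProb (G.combine σ τ) l :=
  cylProb_congr (fun M _ hM q => combine_updS_agree σ τ β M hM q)

lemma combine_updS_agree_off (σ : G.Strategy p) (τ : G.CoStrategy p)
    (β : G.Mixed p (G.lastS l)) :
    ∀ M, ¬ l <+: M → ∀ q, (G.combine (updS p l σ β) τ) q M = (G.combine σ τ) q M :=
  fun M hM q => combine_updS_agree σ τ β M (fun h => hM (h ▸ List.prefix_refl l)) q

lemma combine_updS_agree_sub (σ : G.Strategy p) (τ : G.CoStrategy p)
    (β : G.Mixed p (G.lastS l)) (s' : G.S) :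
    ∀ M, (l ++ [s']) <+: M → ∀ q,
      (G.combine (updS p l σ β) τ) q M = (G.combine σ τ) q M := by
  intro M hM q
  apply combine_updS_agree
  intro he
  subst he
  have := hM.length_le
  simp at this

lemma step_nonneg' (σv : G.Profile) (L : List G.S) (s' : G.S) :
    0 ≤ G.stepProb (G.lastS L) (fun q => ((σv q L)).1) s' :=
  stepProb_nonneg _ _ (fun q a => (σv q L).2.1 a) _

/-- The Dirac update of `σ` at `l` on action `a`. -/
noncomputable def dupd (σ : G.Strategy p) (a : G.A) (ha : (σ l).1 a ≠ 0) : G.Strategy p :=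
  updS p l σ (G.dirac p (G.lastS l) a ((σ l).2.2.2 a ha))

lemma dupd_def (σ : G.Strategy p) (a : G.A) (ha : (σ l).1 a ≠ 0) :
    dupd σ a ha = updS p l σ (G.dirac p (G.lastS l) a ((σ l).2.2.2 a ha)) := rfl

lemma step_linear (σ : G.Strategy p) (τ : G.CoStrategy p) (s' : G.S) :
    G.stepProb (G.lastS l) (fun q => ((G.combine σ τ) q l).1) s'
      = ∑ a : G.A, (σ l).1 a *
          (if ha : (σ l).1 a ≠ 0 then
            G.stepProb (G.lastS l)
              (fun q => ((G.combine (dupd σ a ha) τ) q l).1) s'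
          else 0) := by
  rw [stepProb_linear (p := p) (G.lastS l) (fun q => ((G.combine σ τ) q l).1) s']
  apply Finset.sum_congr rfl
  intro a _
  have hF : G.combine σ τ p = σ := combine_p σ τ
  rcases Classical.em ((σ l).1 a ≠ 0) with ha | ha
  · rw [dif_pos ha, dupd_def, moves_update, hF]
    rfl
  · rw [dif_neg ha]
    push_neg at ha
    rw [hF, ha]
    ring

lemma win_iff_diracs (hwin : ∀ p, MeasurableSet (win p)) (hPr : G.ValidPr Pr)
    (hl : G.IsHistory l) (σ : G.Strategy p) (τ : G.CoStrategy p) :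
    G.Wins Pr st (G.combine σ τ) (win p) ↔
      ∀ a (ha : (σ l).1 a ≠ 0),
        G.Wins Pr st (G.combine (dupd σ a ha) τ) (win p) := by
  have hlne : l ≠ [] := isHistory_ne_nil hl
  set r := G.cylProb (G.combine σ τ) l with hrdef
  have hstep : ∀ a (ha : (σ l).1 a ≠ 0) s',
      G.cylProb (G.combine (dupd σ a ha) τ) (l ++ [s'])
        = r * G.stepProb (G.lastS l) (fun q => ((G.combine (dupd σ a ha) τ) q l).1) s' := by
    intro a ha s'
    rw [cylProb_append _ l hlne s', dupd_def, reach_updS]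
  have hstepσ : ∀ s', G.cylProb (G.combine σ τ) (l ++ [s'])
      = r * G.stepProb (G.lastS l) (fun q => ((G.combine σ τ) q l).1) s' := by
    intro s'
    rw [cylProb_append _ l hlne s']
  rw [wins_decomp (l := l) hwin hPr]
  constructor
  · rintro ⟨hoff, hsub⟩ a ha
    rw [wins_decomp (l := l) hwin hPr]
    refine ⟨(winsIn_off_congr hwin hPr (combine_updS_agree_off σ τ _)).2 hoff, ?_⟩
    intro s'
    rcases Classical.em (0 < G.cylProb (G.combine (dupd σ a ha) τ) (l ++ [s'])) with hp | hp
    · apply winsIn_sub_transfer hwin hPr s' (combine_updS_agree_sub σ τ _ s')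
        (fun _ => ?_) (hsub s')
      rw [hstepσ s']
      rw [hstep a ha s'] at hp
      have h1 : 0 < r := by
        by_contra h
        have : r = 0 := le_antisymm (le_of_not_gt h) (by rw [hrdef]; exact cylProb_nonneg _ _)
        rw [this, zero_mul] at hp
        exact lt_irrefl _ hp
      have h2 : 0 < G.stepProb (G.lastS l)
          (fun q => ((G.combine (dupd σ a ha) τ) q l).1) s' := by
        by_contra h
        have : G.stepProb (G.lastS l) (fun q => ((G.combine (dupd σ a ha) τ) q l).1) s' = 0 :=
          le_antisymm (le_of_not_gt h) (step_nonneg' _ _ _)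
        rw [this, mul_zero] at hp
        exact lt_irrefl _ hp
      apply mul_pos h1
      rw [step_linear σ τ s']
      have hterm : 0 < (σ l).1 a * (if ha' : (σ l).1 a ≠ 0 then
          G.stepProb (G.lastS l) (fun q => ((G.combine (dupd σ a ha') τ) q l).1) s' else 0) := by
        rw [dif_pos ha]
        exact mul_pos (lt_of_le_of_ne ((σ l).2.1 a) (Ne.symm ha)) h2
      apply lt_of_lt_of_le hterm
      apply Finset.single_le_sum (f := fun b => (σ l).1 b * (if hb : (σ l).1 b ≠ 0 then
          G.stepProb (G.lastS l) (fun q => ((G.combine (dupd σ b hb) τ) q l).1) s' else 0))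
        (fun b _ => ?_) (Finset.mem_univ a)
      show 0 ≤ (σ l).1 b * _
      rcases Classical.em ((σ l).1 b ≠ 0) with hb | hb
      · rw [dif_pos hb]
        exact mul_nonneg ((σ l).2.1 b) (step_nonneg' _ _ _)
      · rw [dif_neg hb, mul_zero]
    · push_neg at hp
      exact winsIn_of_reach_zero hPr _ s'
        (le_antisymm hp (cylProb_nonneg _ _))
  · intro hδ
    have hoff : WinsIn G win Pr st p (G.combine σ τ) ((G.Cyl l)ᶜ) := by
      have hne : ∃ a, (σ l).1 a ≠ 0 := by
        by_contra h
        push_neg at h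
        have := (σ l).2.2.1
        rw [Finset.sum_congr rfl (fun a _ => h a)] at this
        simp at this
      obtain ⟨a, ha⟩ := hne
      have := (wins_decomp (l := l) hwin hPr _).1 (hδ a ha)
      exact (winsIn_off_congr hwin hPr (combine_updS_agree_off σ τ _)).1 this.1
    refine ⟨hoff, ?_⟩
    intro s'
    rcases Classical.em (0 < G.cylProb (G.combine σ τ) (l ++ [s'])) with hp | hp
    · rw [hstepσ s'] at hp
      have h1 : 0 < r := by
        by_contra h
        have : r = 0 := le_antisymm (le_of_not_gt h) (by rw [hrdef]; exact cylProb_nonneg _ _)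
        rw [this, zero_mul] at hp
        exact lt_irrefl _ hp
      have h2 : 0 < G.stepProb (G.lastS l) (fun q => ((G.combine σ τ) q l).1) s' := by
        by_contra h
        have : G.stepProb (G.lastS l) (fun q => ((G.combine σ τ) q l).1) s' = 0 :=
          le_antisymm (le_of_not_gt h) (step_nonneg' _ _ _)
        rw [this, mul_zero] at hp
        exact lt_irrefl _ hp
      rw [step_linear σ τ s'] at h2
      have hex : ∃ a, ¬ ((σ l).1 a * (if ha : (σ l).1 a ≠ 0 then
          G.stepProb (G.lastS l) (fun q => ((G.combine (dupd σ a ha) τ) q l).1) s' else 0) = 0) := by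
        by_contra h
        push_neg at h
        rw [Finset.sum_congr rfl (fun a _ => h a)] at h2
        simp at h2
      obtain ⟨a, hane⟩ := hex
      have ha : (σ l).1 a ≠ 0 := by
        intro h0
        exact hane (mul_eq_zero_of_left h0 _)
      rw [dif_pos ha] at hane
      have hsa : 0 < G.stepProb (G.lastS l)
          (fun q => ((G.combine (dupd σ a ha) τ) q l).1) s' := by
        rcases mul_ne_zero_iff.1 hane with ⟨-, h⟩
        exact lt_of_le_of_ne (step_nonneg' _ _ _) (Ne.symm h)
      have := (wins_decomp (l := l) hwin hPr _).1 (hδ a ha)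
      apply winsIn_sub_transfer hwin hPr s'
        (fun M hM q => (combine_updS_agree_sub σ τ _ s' M hM q).symm)
        (fun _ => ?_) (this.2 s')
      show 0 < G.cylProb (G.combine (dupd σ a ha) τ) (l ++ [s'])
      rw [hstep a ha s']
      exact mul_pos h1 hsa
    · push_neg at hp
      exact winsIn_of_reach_zero hPr _ s' (le_antisymm hp (cylProb_nonneg _ _))

/-! ### Basic facts about move dominance -/

lemma histOfS_updS (hl : G.IsHistory l) (σ : G.Strategy p) (β : G.Mixed p (G.lastS l)) :
    l ∈ G.HistOfS (updS p l σ β) ↔ l ∈ G.HistOfS σ := by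
  unfold ConcGame.HistOfS ConcGame.HistOf
  simp only [Set.mem_iUnion, Set.mem_setOf_eq]
  constructor
  · rintro ⟨τ, h1, h2⟩
    rw [reach_updS] at h2
    exact ⟨τ, h1, h2⟩
  · rintro ⟨τ, h1, h2⟩
    refine ⟨τ, h1, ?_⟩
    rw [reach_updS]
    exact h2

lemma win_congr_updS_of_not_hist (hwin : ∀ p, MeasurableSet (win p)) (hPr : G.ValidPr Pr)
    (hl : G.IsHistory l) {σ : G.Strategy p} (hnc : l ∉ G.HistOfS σ)
    (β : G.Mixed p (G.lastS l)) (τ : G.CoStrategy p) :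
    G.Wins Pr st (G.combine (updS p l σ β) τ) (win p) ↔
      G.Wins Pr st (G.combine σ τ) (win p) := by
  have hz : G.cylProb (G.combine σ τ) l = 0 := by
    by_contra h
    apply hnc
    unfold ConcGame.HistOfS ConcGame.HistOf
    simp only [Set.mem_iUnion, Set.mem_setOf_eq]
    exact ⟨τ, hl, lt_of_le_of_ne (cylProb_nonneg _ _) (Ne.symm h)⟩
  rw [wins_decomp (l := l) hwin hPr, wins_decomp (l := l) hwin hPr]
  constructor <;> rintro ⟨h1, h2⟩
  · refine ⟨(winsIn_off_congr hwin hPr (combine_updS_agree_off σ τ β)).1 h1, fun s' => ?_⟩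
    exact winsIn_of_reach_zero hPr _ s' (cylProb_eq_zero_of_prefix ⟨[s'], rfl⟩ hz)
  · refine ⟨(winsIn_off_congr hwin hPr (combine_updS_agree_off σ τ β)).2 h1, fun s' => ?_⟩
    apply winsIn_of_reach_zero hPr _ s'
    apply cylProb_eq_zero_of_prefix ⟨[s'], rfl⟩
    rw [reach_updS]
    exact hz

lemma mwdom_of_supp_subset (hwin : ∀ p, MeasurableSet (win p)) (hPr : G.ValidPr Pr)
    (hl : G.IsHistory l) {β γ : G.Mixed p (G.lastS l)}
    (hsub : ∀ a, γ.1 a ≠ 0 → β.1 a ≠ 0) : G.MWDom Pr win st l β γ := by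
  intro σ hσ hσl
  refine ⟨updS p l σ γ, updS_self σ γ, fun τ hw => ?_⟩
  rw [win_iff_diracs hwin hPr hl] at hw ⊢
  intro a ha
  have ha2 : γ.1 a ≠ 0 := by
    rw [updS_self] at ha
    exact ha
  have ha3 : (σ l).1 a ≠ 0 := by
    rw [hσl]
    exact hsub a ha2
  have he : dupd (updS p l σ γ) a ha = dupd σ a ha3 := by
    rw [dupd_def, dupd_def, updS_updS]
  rw [he]
  exact hw a ha3

lemma mwdom_left_mono (hwin : ∀ p, MeasurableSet (win p)) (hPr : G.ValidPr Pr)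
    (hl : G.IsHistory l) {β β' γ : G.Mixed p (G.lastS l)}
    (hMW : G.MWDom Pr win st l β γ)
    (hsub : ∀ a, β.1 a ≠ 0 → β'.1 a ≠ 0) : G.MWDom Pr win st l β' γ := by
  intro σ hσ hσl
  obtain ⟨σ'', hσ''l, hWD⟩ := hMW (updS p l σ β) ((histOfS_updS hl σ β).2 hσ) (updS_self σ β)
  refine ⟨σ'', hσ''l, fun τ hw => ?_⟩
  apply hWD τ
  rw [win_iff_diracs hwin hPr hl] at hw ⊢
  intro a ha
  have ha2 : β.1 a ≠ 0 := by
    rw [updS_self] at ha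
    exact ha
  have ha3 : (σ l).1 a ≠ 0 := by
    rw [hσl]
    exact hsub a ha2
  have he : dupd (updS p l σ β) a ha = dupd σ a ha3 := by
    rw [dupd_def, dupd_def, updS_updS]
  rw [he]
  exact hw a ha3

lemma mwdom_trans (hwin : ∀ p, MeasurableSet (win p)) (hPr : G.ValidPr Pr)
    (hl : G.IsHistory l) {β γ ζ : G.Mixed p (G.lastS l)}
    (h1 : G.MWDom Pr win st l β γ) (h2 : G.MWDom Pr win st l γ ζ) :
    G.MWDom Pr win st l β ζ := by
  intro σ hσ hσl
  obtain ⟨σ₁, hσ₁l, hWD₁⟩ := h1 σ hσ hσl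
  rcases Classical.em (l ∈ G.HistOfS σ₁) with hc | hc
  · obtain ⟨σ₂, hσ₂l, hWD₂⟩ := h2 σ₁ hc hσ₁l
    exact ⟨σ₂, hσ₂l, fun τ hw => hWD₂ τ (hWD₁ τ hw)⟩
  · refine ⟨updS p l σ₁ ζ, updS_self _ _, fun τ hw => ?_⟩
    exact (win_congr_updS_of_not_hist hwin hPr hl hc ζ τ).2 (hWD₁ τ hw)

/-! ### Merge machinery -/

lemma not_prefix_of_proper {M : List G.S} (hM : M <+: l) (hne : M ≠ l) : ¬ l <+: M :=
  fun hc => hne (hM.eq_of_length (le_antisymm hM.length_le hc.length_le))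

lemma append_singleton_prefix_eq {s₁ s₂ : G.S} {M : List G.S}
    (h1 : (l ++ [s₁]) <+: M) (h2 : (l ++ [s₂]) <+: M) : s₁ = s₂ := by
  rcases List.prefix_or_prefix_of_prefix h1 h2 with h | h
  · have := h.eq_of_length (by simp)
    simpa using this
  · have := h.eq_of_length (by simp)
    have h2 := this.symm
    simpa using h2

def coPatchC (p : G.P) (l : List G.S) (τ₁ τ₂ : G.CoStrategy p) : G.CoStrategy p :=
  fun q hq h => if l <+: h then τ₂ q hq h else τ₁ q hq h

def coGraftC (p : G.P) (K : List G.S) (τ η : G.CoStrategy p) : G.CoStrategy p :=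
  fun q hq h => if K <+: h then η q hq h else τ q hq h

def graftS (p : G.P) (K : List G.S) (σ θ : G.Strategy p) : G.Strategy p :=
  fun h => if K <+: h then θ h else σ h

lemma combine_coPatch_agree_off (σ : G.Strategy p) (τ₁ τ₂ : G.CoStrategy p) :
    ∀ M, ¬ l <+: M → ∀ q,
      (G.combine σ (coPatchC p l τ₁ τ₂)) q M = (G.combine σ τ₁) q M := by
  intro M hM q
  by_cases hq : q = p
  · subst hq; rw [combine_p, combine_p]
  · rw [combine_ne _ _ hq, combine_ne _ _ hq, coPatchC, if_neg hM]

lemma combine_coPatch_agree_on (σ : G.Strategy p) (τ₁ τ₂ : G.CoStrategy p) :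
    ∀ M, l <+: M → ∀ q,
      (G.combine σ (coPatchC p l τ₁ τ₂)) q M = (G.combine σ τ₂) q M := by
  intro M hM q
  by_cases hq : q = p
  · subst hq; rw [combine_p, combine_p]
  · rw [combine_ne _ _ hq, combine_ne _ _ hq, coPatchC, if_pos hM]

lemma combine_coGraft_agree_off (σ : G.Strategy p) (τ η : G.CoStrategy p) (K : List G.S) :
    ∀ M, ¬ K <+: M → ∀ q,
      (G.combine σ (coGraftC p K τ η)) q M = (G.combine σ τ) q M := by
  intro M hM q
  by_cases hq : q = p
  · subst hq; rw [combine_p, combine_p]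
  · rw [combine_ne _ _ hq, combine_ne _ _ hq, coGraftC, if_neg hM]

lemma combine_coGraft_agree_on (σ : G.Strategy p) (τ η : G.CoStrategy p) (K : List G.S) :
    ∀ M, K <+: M → ∀ q,
      (G.combine σ (coGraftC p K τ η)) q M = (G.combine σ η) q M := by
  intro M hM q
  by_cases hq : q = p
  · subst hq; rw [combine_p, combine_p]
  · rw [combine_ne _ _ hq, combine_ne _ _ hq, coGraftC, if_pos hM]

lemma reach_coPatch (σ : G.Strategy p) (τ₁ τ₂ : G.CoStrategy p) :
    G.cylProb (G.combine σ (coPatchC p l τ₁ τ₂)) l = G.cylProb (G.combine σ τ₁) l :=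
  cylProb_congr (fun M hM hne q =>
    combine_coPatch_agree_off σ τ₁ τ₂ M (not_prefix_of_proper hM hne) q)

lemma moves_coPatch (σ : G.Strategy p) (τ₁ τ₂ : G.CoStrategy p) :
    (fun q => ((G.combine σ (coPatchC p l τ₁ τ₂)) q l).1)
      = fun q => ((G.combine σ τ₂) q l).1 := by
  funext q
  rw [combine_coPatch_agree_on σ τ₁ τ₂ l (List.prefix_refl l) q]

lemma win_coPatch (hwin : ∀ p, MeasurableSet (win p)) (hPr : G.ValidPr Pr)
    (hl : G.IsHistory l) (σ : G.Strategy p) (τ₁ τ₂ : G.CoStrategy p)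
    (h1 : G.Wins Pr st (G.combine σ τ₁) (win p))
    (h2 : G.Wins Pr st (G.combine σ τ₂) (win p))
    (hr2 : 0 < G.cylProb (G.combine σ τ₂) l) :
    G.Wins Pr st (G.combine σ (coPatchC p l τ₁ τ₂)) (win p) := by
  have hlne : l ≠ [] := isHistory_ne_nil hl
  rw [wins_decomp (l := l) hwin hPr] at h1 h2 ⊢
  constructor
  · exact (winsIn_off_congr hwin hPr (combine_coPatch_agree_off σ τ₁ τ₂)).2 h1.1
  · intro s'
    apply winsIn_sub_transfer hwin hPr s'
      (fun M hM q => combine_coPatch_agree_on σ τ₁ τ₂ M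
        ((List.prefix_append l [s']).trans hM) q)
      (fun hp => ?_) (h2.2 s')
    rw [cylProb_append _ l hlne s', reach_coPatch, moves_coPatch] at hp
    rw [cylProb_append _ l hlne s']
    rcases mul_pos_iff.1 hp with ⟨-, hstep⟩ | ⟨hneg, -⟩
    · exact mul_pos hr2 hstep
    · exact absurd (cylProb_nonneg (G.combine σ τ₁) l) (not_le.2 hneg)

lemma win_slot_free (hwin : ∀ p, MeasurableSet (win p)) (hPr : G.ValidPr Pr)
    (hl : G.IsHistory l) (σ : G.Strategy p) (τ η : G.CoStrategy p) (s' : G.S)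
    (hw : G.Wins Pr st (G.combine σ τ) (win p))
    (hz : G.cylProb (G.combine σ τ) (l ++ [s']) = 0) :
    G.Wins Pr st (G.combine σ (coGraftC p (l ++ [s']) τ η)) (win p) := by
  rw [wins_decomp (l := l) hwin hPr] at hw ⊢
  constructor
  · apply (winsIn_off_congr hwin hPr (fun M hM q =>
      combine_coGraft_agree_off σ τ η (l ++ [s']) M
        (fun hc => hM ((List.prefix_append l [s']).trans hc)) q)).2 hw.1
  · intro s''
    have hreach : G.cylProb (G.combine σ (coGraftC p (l ++ [s']) τ η)) (l ++ [s''])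
        = G.cylProb (G.combine σ τ) (l ++ [s'']) := by
      apply cylProb_congr
      intro M hM hne q
      apply combine_coGraft_agree_off
      intro hc
      have hlen1 := hc.length_le
      have hlen2 := hM.length_le
      simp only [List.length_append, List.length_singleton] at hlen1 hlen2
      have : M.length = l.length + 1 := by omega
      have : M = l ++ [s''] := hM.eq_of_length (by simp [this])
      exact hne this
    by_cases hss : s'' = s'
    · subst hss
      apply winsIn_of_reach_zero hPr _ s''
      rw [hreach]
      exact hz
    · apply winsIn_sub_transfer hwin hPr s''
        (fun M hM q => combine_coGraft_agree_off σ τ η (l ++ [s']) M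
          (fun hc => hss (append_singleton_prefix_eq hM hc)) q)
        (fun hp => by rwa [hreach] at hp) (hw.2 s'')

def UWin (G : ConcGame) (win : G.P → Set G.Run) (Pr : G.Profile → Measure G.Run)
    (st : Sem) (p : G.P) (l : List G.S) (s' : G.S) : Prop :=
  ∃ θ : G.Strategy p, ∀ (σ₀ : G.Strategy p) (τ₀ : G.CoStrategy p),
    WinsIn G win Pr st p (G.combine (graftS p (l ++ [s']) σ₀ θ) τ₀) (G.Cyl (l ++ [s']))

lemma uw_extract (hwin : ∀ p, MeasurableSet (win p)) (hPr : G.ValidPr Pr)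
    (s' : G.S) (σw : G.Strategy p) (τh : G.CoStrategy p)
    (hfam : ∀ η : G.CoStrategy p,
      G.Wins Pr st (G.combine σw (coGraftC p (l ++ [s']) τh η)) (win p) ∧
      0 < G.cylProb (G.combine σw (coGraftC p (l ++ [s']) τh η)) (l ++ [s'])) :
    UWin G win Pr st p l s' := by
  refine ⟨σw, fun σ₀ τ₀ => ?_⟩
  obtain ⟨hW, hR⟩ := hfam τ₀
  have hsub := ((wins_decomp (l := l) hwin hPr _).1 hW).2 s'
  apply winsIn_sub_transfer hwin hPr s' (fun M hM q => ?_) (fun _ => hR) hsub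
  by_cases hq : q = p
  · subst hq
    rw [combine_p, combine_p, graftS, if_pos hM]
  · rw [combine_ne _ _ hq, combine_ne _ _ hq, coGraftC, if_pos hM]

noncomputable def uwTheta (G : ConcGame) (win : G.P → Set G.Run)
    (Pr : G.Profile → Measure G.Run) (st : Sem) (p : G.P) (l : List G.S)
    (dflt : G.Strategy p) (s' : G.S) : G.Strategy p :=
  if h : UWin G win Pr st p l s' then h.choose else dflt

lemma uwTheta_spec {dflt : G.Strategy p} {s' : G.S} (h : UWin G win Pr st p l s') :
    ∀ (σ₀ : G.Strategy p) (τ₀ : G.CoStrategy p),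
      WinsIn G win Pr st p
        (G.combine (graftS p (l ++ [s']) σ₀ (uwTheta G win Pr st p l dflt s')) τ₀)
        (G.Cyl (l ++ [s'])) := by
  intro σ₀ τ₀
  have he : uwTheta G win Pr st p l dflt s' = h.choose := by
    rw [uwTheta, dif_pos h]
  rw [he]
  exact h.choose_spec σ₀ τ₀

noncomputable def mergeStrat (G : ConcGame) (win : G.P → Set G.Run)
    (Pr : G.Profile → Measure G.Run) (st : Sem) (p : G.P) (l : List G.S)
    (σ : G.Strategy p) (γ : G.Mixed p (G.lastS l)) : G.Strategy p :=
  fun h => if e : h = l then e.symm ▸ γ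
    else if hx : ∃ s', (l ++ [s']) <+: h ∧ UWin G win Pr st p l s' then
      uwTheta G win Pr st p l σ hx.choose h
    else σ h

lemma mergeStrat_at (σ : G.Strategy p) (γ : G.Mixed p (G.lastS l)) :
    mergeStrat G win Pr st p l σ γ l = γ := by
  simp [mergeStrat]

lemma mergeStrat_off (σ : G.Strategy p) (γ : G.Mixed p (G.lastS l)) {h : List G.S}
    (hh : ¬ l <+: h) : mergeStrat G win Pr st p l σ γ h = σ h := by
  have hne : h ≠ l := fun e => hh (e ▸ List.prefix_refl l)
  unfold mergeStrat
  rw [dif_neg hne, dif_neg]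
  rintro ⟨s', hp, -⟩
  exact hh ((List.prefix_append l [s']).trans hp)

lemma mergeStrat_sub (σ : G.Strategy p) (γ : G.Mixed p (G.lastS l)) {s' : G.S}
    {h : List G.S} (hpre : (l ++ [s']) <+: h) (hU : UWin G win Pr st p l s') :
    mergeStrat G win Pr st p l σ γ h = uwTheta G win Pr st p l σ s' h := by
  have hne : h ≠ l := by
    intro e
    subst e
    have := hpre.length_le
    simp at this
  have hx : ∃ s'', (l ++ [s'']) <+: h ∧ UWin G win Pr st p l s'' := ⟨s', hpre, hU⟩
  unfold mergeStrat
  rw [dif_neg hne, dif_pos hx]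
  rw [show hx.choose = s' from append_singleton_prefix_eq hx.choose_spec.1 hpre]

lemma mergeStrat_sub_nonUW (σ : G.Strategy p) (γ : G.Mixed p (G.lastS l)) {s' : G.S}
    {h : List G.S} (hpre : (l ++ [s']) <+: h) (hnU : ¬ UWin G win Pr st p l s') :
    mergeStrat G win Pr st p l σ γ h = σ h := by
  have hne : h ≠ l := by
    intro e
    subst e
    have := hpre.length_le
    simp at this
  unfold mergeStrat
  rw [dif_neg hne, dif_neg]
  rintro ⟨s'', hp2, hU2⟩
  rw [append_singleton_prefix_eq hp2 hpre] at hU2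
  exact hnU hU2

lemma merge_lemma (hwin : ∀ p, MeasurableSet (win p)) (hPr : G.ValidPr Pr)
    (hl : G.IsHistory l) (σ : G.Strategy p) (γ : G.Mixed p (G.lastS l))
    (hσc : ∀ a (ha : γ.1 a ≠ 0), ∃ σa : G.Strategy p,
      σa l = G.dirac p (G.lastS l) a (γ.2.2.2 a ha) ∧ G.WDom Pr win st σ σa) :
    ∃ σ' : G.Strategy p, σ' l = γ ∧ G.WDom Pr win st σ σ' := by
  have hlne : l ≠ [] := isHistory_ne_nil hl
  rcases Classical.em (∃ a, ∃ ha : γ.1 a ≠ 0, ∃ σa : G.Strategy p,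
      σa l = G.dirac p (G.lastS l) a (γ.2.2.2 a ha) ∧ G.WDom Pr win st σ σa ∧
      ∀ τ', G.Wins Pr st (G.combine σ τ') (win p) →
        G.cylProb (G.combine σa τ') l = 0) with hA | hB
  · obtain ⟨a, ha, σa, hσal, hWD, hzero⟩ := hA
    refine ⟨updS p l σa γ, updS_self _ _, fun τ hw => ?_⟩
    have h1 := hWD τ hw
    rw [wins_decomp (l := l) hwin hPr] at h1 ⊢
    refine ⟨(winsIn_off_congr hwin hPr (combine_updS_agree_off σa τ γ)).2 h1.1,
      fun s'' => ?_⟩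
    apply winsIn_of_reach_zero hPr _ s''
    apply cylProb_eq_zero_of_prefix ⟨[s''], rfl⟩
    rw [reach_updS]
    exact hzero τ hw
  · set σ' := mergeStrat G win Pr st p l σ γ with hσ'def
    refine ⟨σ', mergeStrat_at σ γ, fun τ hw => ?_⟩
    have hwd := (wins_decomp (l := l) hwin hPr _).1 hw
    rw [wins_decomp (l := l) hwin hPr]
    have hagoff : ∀ M, ¬ l <+: M → ∀ q,
        (G.combine σ' τ) q M = (G.combine σ τ) q M := by
      intro M hM q
      by_cases hq : q = p
      · subst hq
        have h1 : G.combine σ' τ q = σ' := combine_p _ _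
        have h2 : G.combine σ τ q = σ := combine_p _ _
        simp only [h1, h2]
        simp only [hσ'def]
        exact mergeStrat_off σ γ hM
      · have h1 : G.combine σ' τ q = τ q hq := combine_ne _ _ hq
        have h2 : G.combine σ τ q = τ q hq := combine_ne _ _ hq
        rw [h1, h2]
    refine ⟨(winsIn_off_congr hwin hPr hagoff).2 hwd.1, fun s'' => ?_⟩
    have hr' : G.cylProb (G.combine σ' τ) l = G.cylProb (G.combine σ τ) l :=
      cylProb_congr (fun M hM hne q => hagoff M (not_prefix_of_proper hM hne) q)
    rcases Classical.em (0 < G.cylProb (G.combine σ' τ) (l ++ [s''])) with hp | hp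
    swap
    · exact winsIn_of_reach_zero hPr _ s''
        (le_antisymm (le_of_not_gt hp) (cylProb_nonneg _ _))
    rw [cylProb_append _ l hlne s''] at hp
    have hrpos : 0 < G.cylProb (G.combine σ τ) l := by
      rcases mul_pos_iff.1 hp with ⟨h1, -⟩ | ⟨h1, -⟩
      · rwa [hr'] at h1
      · exfalso
        rw [hr'] at h1
        exact absurd (cylProb_nonneg _ _) (not_le.2 h1)
    have hstepγ : 0 < G.stepProb (G.lastS l) (fun q => ((G.combine σ' τ) q l).1) s'' := by
      rcases mul_pos_iff.1 hp with ⟨-, h1⟩ | ⟨-, h1⟩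
      · exact h1
      · exact absurd (step_nonneg' _ _ _) (not_le.2 h1)
    by_cases hU : UWin G win Pr st p l s''
    · have hsame : G.combine σ' τ
          = G.combine (graftS p (l ++ [s'']) σ' (uwTheta G win Pr st p l σ s'')) τ := by
        funext q
        by_cases hq : q = p
        · subst hq
          have h1 : G.combine σ' τ q = σ' := combine_p _ _
          have h2 : G.combine (graftS q (l ++ [s'']) σ' (uwTheta G win Pr st q l σ s'')) τ q
              = graftS q (l ++ [s'']) σ' (uwTheta G win Pr st q l σ s'') := combine_p _ _
          rw [h1, h2]
          funext M
          by_cases hM : (l ++ [s'']) <+: M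
          · rw [graftS, if_pos hM, hσ'def, mergeStrat_sub σ γ hM hU]
          · rw [graftS, if_neg hM]
        · have h1 : G.combine σ' τ q = τ q hq := combine_ne _ _ hq
          have h2 : G.combine (graftS p (l ++ [s'']) σ' (uwTheta G win Pr st p l σ s'')) τ q
              = τ q hq := combine_ne _ _ hq
          rw [h1, h2]
      rw [hsame]
      exact uwTheta_spec hU σ' τ
    · have hagsub : ∀ M, (l ++ [s'']) <+: M → ∀ q,
          (G.combine σ' τ) q M = (G.combine σ τ) q M := by
        intro M hM q
        by_cases hq : q = p
        · subst hq
          have h1 : G.combine σ' τ q = σ' := combine_p _ _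
          have h2 : G.combine σ τ q = σ := combine_p _ _
          simp only [h1, h2]
          simp only [hσ'def]
          exact mergeStrat_sub_nonUW σ γ hM hU
        · have h1 : G.combine σ' τ q = τ q hq := combine_ne _ _ hq
          have h2 : G.combine σ τ q = τ q hq := combine_ne _ _ hq
          rw [h1, h2]
      set F := (fun q => ((G.combine σ τ) q l).1) with hFdef
      have hFnonneg : ∀ q a, 0 ≤ F q a := fun q a => ((G.combine σ τ) q l).2.1 a
      have hindnonneg : ∀ (c : G.A) q a,
          0 ≤ Function.update F p (fun b => if b = c then (1:ℝ) else 0) q a := by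
        intro c q a
        by_cases hq : q = p
        · subst hq
          rw [Function.update_self]
          split <;> norm_num
        · rw [Function.update_of_ne hq]
          exact hFnonneg q a
      have hstepβ : 0 < G.stepProb (G.lastS l) F s'' := by
        by_contra hsb
        have hsb0 : G.stepProb (G.lastS l) F s'' = 0 :=
          le_antisymm (le_of_not_gt hsb) (stepProb_nonneg _ _ hFnonneg _)
        have hmov : (fun q => ((G.combine σ' τ) q l).1) = Function.update F p γ.1 := by
          funext q
          by_cases hq : q = p
          · subst hq
            have h1 : G.combine σ' τ q = σ' := combine_p _ _
            simp only [h1, Function.update_self]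
            simp only [hσ'def, mergeStrat_at]
          · have h1 : G.combine σ' τ q = τ q hq := combine_ne _ _ hq
            have h2 : G.combine σ τ q = τ q hq := combine_ne _ _ hq
            simp only [h1, hFdef, h2, Function.update_of_ne hq]
        rw [hmov, stepProb_linear (p := p) (G.lastS l) (Function.update F p γ.1) s'']
          at hstepγ
        have hupd : ∀ a : G.A, Function.update (Function.update F p γ.1) p
            (fun b => if b = a then (1:ℝ) else 0)
            = Function.update F p (fun b => if b = a then (1:ℝ) else 0) := by
          intro a
          rw [Function.update_idem]
        simp only [hupd, Function.update_self] at hstepγ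
        have hex : ∃ c, γ.1 c * G.stepProb (G.lastS l)
            (Function.update F p (fun b => if b = c then (1:ℝ) else 0)) s'' ≠ 0 := by
          by_contra hno
          push_neg at hno
          rw [Finset.sum_congr rfl (fun c _ => hno c)] at hstepγ
          simp at hstepγ
        obtain ⟨c, hc0⟩ := hex
        have hc : γ.1 c ≠ 0 := fun h0 => hc0 (by rw [h0, zero_mul])
        have hsc : 0 < G.stepProb (G.lastS l)
            (Function.update F p (fun b => if b = c then (1:ℝ) else 0)) s'' := by
          rcases mul_ne_zero_iff.1 hc0 with ⟨-, h⟩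
          exact lt_of_le_of_ne (stepProb_nonneg _ _ (hindnonneg c) _) (Ne.symm h)
        obtain ⟨σc, hσcl, hWDc⟩ := hσc c hc
        have hex3 : ∃ τ', G.Wins Pr st (G.combine σ τ') (win p) ∧
            G.cylProb (G.combine σc τ') l ≠ 0 := by
          by_contra hno
          push_neg at hno
          exact hB ⟨c, hc, σc, hσcl, hWDc, fun τ' hwτ' => hno τ' hwτ'⟩
        obtain ⟨τc, hwτc, hrc⟩ := hex3
        have hrcpos : 0 < G.cylProb (G.combine σc τc) l :=
          lt_of_le_of_ne (cylProb_nonneg _ _) (Ne.symm hrc)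
        set τ₃ := coPatchC p l τc τ with hτ₃
        have hwτ₃ : G.Wins Pr st (G.combine σ τ₃) (win p) :=
          win_coPatch hwin hPr hl σ τc τ hwτc hw hrpos
        have hz₃ : G.cylProb (G.combine σ τ₃) (l ++ [s'']) = 0 := by
          rw [cylProb_append _ l hlne s'', moves_coPatch, ← hFdef, hsb0, mul_zero]
        have hfree : ∀ η, G.Wins Pr st
            (G.combine σ (coGraftC p (l ++ [s'']) τ₃ η)) (win p) :=
          fun η => win_slot_free hwin hPr hl σ τ₃ η s'' hwτ₃ hz₃
        apply hU
        apply uw_extract hwin hPr s'' σc τ₃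
        intro η
        constructor
        · exact hWDc (coGraftC p (l ++ [s'']) τ₃ η) (hfree η)
        · rw [cylProb_append _ l hlne s'']
          have e1 : G.cylProb (G.combine σc (coGraftC p (l ++ [s'']) τ₃ η)) l
              = G.cylProb (G.combine σc τc) l := by
            apply cylProb_congr
            intro M hM hne q
            have hM1 : ¬ (l ++ [s'']) <+: M := fun hc' =>
              (not_prefix_of_proper hM hne) ((List.prefix_append l [s'']).trans hc')
            rw [combine_coGraft_agree_off σc τ₃ η _ M hM1 q]
            exact combine_coPatch_agree_off σc τc τ M (not_prefix_of_proper hM hne) q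
          have e2 : (fun q => ((G.combine σc (coGraftC p (l ++ [s'']) τ₃ η)) q l).1)
              = Function.update F p (fun b => if b = c then (1:ℝ) else 0) := by
            funext q
            by_cases hq : q = p
            · subst hq
              have h1 : G.combine σc (coGraftC q (l ++ [s'']) τ₃ η) q = σc := combine_p _ _
              simp only [h1, hσcl, Function.update_self]
              rfl
            · have h1 : G.combine σc (coGraftC p (l ++ [s'']) τ₃ η) q
                  = (coGraftC p (l ++ [s'']) τ₃ η) q hq := combine_ne _ _ hq
              have hM1 : ¬ (l ++ [s'']) <+: l := by
                intro hc'
                have := hc'.length_le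
                simp at this
              have h2 : G.combine σ τ q = τ q hq := combine_ne _ _ hq
              simp only [h1, coGraftC, if_neg hM1]
              simp only [hτ₃, coPatchC,
                if_pos (List.prefix_refl l), hFdef, h2, Function.update_of_ne hq]
          rw [e1, e2]
          exact mul_pos hrcpos hsc
      have hreachσ : 0 < G.cylProb (G.combine σ τ) (l ++ [s'']) := by
        rw [cylProb_append _ l hlne s'', ← hFdef]
        exact mul_pos hrpos hstepβ
      exact winsIn_sub_transfer hwin hPr s'' hagsub (fun _ => hreachσ) (hwd.2 s'')

lemma mAdmissible_iff (β : G.Mixed p (G.lastS l)) :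
    G.MAdmissible Pr win st l β ↔
      ∀ β', G.MWDom Pr win st l β β' → G.MWDom Pr win st l β' β := by
  unfold ConcGame.MAdmissible ConcGame.MSDom
  constructor
  · intro h β' h1
    by_contra h2
    exact h β' ⟨h1, h2⟩
  · rintro h β' ⟨h1, h2⟩
    exact h2 (h β' h1)

lemma dirac_apply_ne_zero {s : G.S} {a x : G.A} (hmem : a ∈ G.act p s) :
    (G.dirac p s a hmem).1 x ≠ 0 ↔ x = a := by
  show (if x = a then (1:ℝ) else 0) ≠ 0 ↔ x = a
  split
  · simp_all
  · simp_all

lemma supp_nonempty (α : G.Mixed p (G.lastS l)) : ∃ a, α.1 a ≠ 0 := by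
  by_contra h
  push_neg at h
  have h2 := α.2.2.1
  rw [Finset.sum_congr rfl (fun a _ => h a)] at h2
  simp at h2

end Stmt3Aux

/-- a move is admissible at `l` iff all Dirac moves in its support are
admissible at `l` and equivalent to each other at `l`. -/
theorem stmt3 (G : ConcGame) (win : G.P → Set G.Run)
    (hwin : ∀ p, MeasurableSet (win p))
    (Pr : G.Profile → Measure G.Run) (hPr : G.ValidPr Pr)
    (st : ConcGame.Sem) (p : G.P) (l : List G.S) (hl : G.IsHistory l)
    (α : G.Mixed p (G.lastS l)) :
    G.MAdmissible Pr win st l α ↔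
      ∀ (a : G.A) (ha : a ∈ G.Supp α),
        G.MAdmissible Pr win st l (G.dirac p (G.lastS l) a (α.2.2.2 a ha)) ∧
        ∀ (b : G.A) (hb : b ∈ G.Supp α),
          G.MEquiv Pr win st l (G.dirac p (G.lastS l) a (α.2.2.2 a ha))
            (G.dirac p (G.lastS l) b (α.2.2.2 b hb)) := by
  have hsupp : ∀ (a : G.A) (ha : a ∈ G.Supp α), α.1 a ≠ 0 := fun a ha => ha
  constructor
  · intro hadm
    have hadm' := (mAdmissible_iff α).1 hadm
    intro a ha
    set δa := G.dirac p (G.lastS l) a (α.2.2.2 a ha) with hδa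
    have hαa : G.MWDom Pr win st l α δa :=
      mwdom_of_supp_subset hwin hPr hl
        (fun x hx => by rwa [(dirac_apply_ne_zero _).1 hx])
    have haα : G.MWDom Pr win st l δa α := hadm' δa hαa
    constructor
    · rw [mAdmissible_iff]
      intro β' h1
      have hαβ' : G.MWDom Pr win st l α β' :=
        mwdom_left_mono hwin hPr hl h1
          (fun x hx => by rw [(dirac_apply_ne_zero _).1 hx]; exact ha)
      exact mwdom_trans hwin hPr hl (hadm' β' hαβ') hαa
    · intro b hb
      set δb := G.dirac p (G.lastS l) b (α.2.2.2 b hb) with hδb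
      have hαb : G.MWDom Pr win st l α δb :=
        mwdom_of_supp_subset hwin hPr hl
          (fun x hx => by rwa [(dirac_apply_ne_zero _).1 hx])
      have hbα : G.MWDom Pr win st l δb α := hadm' δb hαb
      exact ⟨mwdom_trans hwin hPr hl haα hαb, mwdom_trans hwin hPr hl hbα hαa⟩
  · intro hrhs
    rw [mAdmissible_iff]
    intro β' hαβ'
    obtain ⟨a₀, ha₀⟩ := supp_nonempty α
    have ha₀' : a₀ ∈ G.Supp α := ha₀
    set δa₀ := G.dirac p (G.lastS l) a₀ (α.2.2.2 a₀ ha₀') with hδa₀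
    have hequiv : ∀ (b : G.A) (hb : α.1 b ≠ 0),
        G.MWDom Pr win st l δa₀ (G.dirac p (G.lastS l) b (α.2.2.2 b hb)) :=
      fun b hb => ((hrhs a₀ ha₀').2 b hb).1
    have ha₀α : G.MWDom Pr win st l δa₀ α := by
      intro σ hσ hσl
      exact merge_lemma hwin hPr hl σ α (fun b hb => hequiv b hb σ hσ hσl)
    have ha₀β' : G.MWDom Pr win st l δa₀ β' := mwdom_trans hwin hPr hl ha₀α hαβ'
    have hβ'a₀ : G.MWDom Pr win st l β' δa₀ :=
      ((mAdmissible_iff _).1 (hrhs a₀ ha₀').1) β' ha₀β'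
    intro σ hσ hσl
    apply merge_lemma hwin hPr hl σ α
    intro b hb
    exact mwdom_trans hwin hPr hl hβ'a₀ (hequiv b hb) σ hσ hσl
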